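/- arXiv:1304.5173 — 4 statements merged into one kernel-verified Lean document; each statement's English description precedes it below -/
import Mathlib

section
/- For every sequence of integer coefficients (c_n)_{n≥1}, the infinite system with variables y and x_{ij} (for 1 ≤ j ≤ i) consisting of the expressions S_i = x_{i1} + x_{i2} + ... + x_{ii} + c_i·y (for every i ≥ 1), together with every variable x_{ij} and the variable y itself, is image partition regular: for every r ≥ 1 and every colouring χ : ℕ → Fin r, there exist integers y and x_{ij} such that y, every x_{ij}, and every S_i are positive natural numbers all receiving the same colour under χ. -/
open Filter Set Finset

attribute [local instance] Ultrafilter.add Ultrafilter.addSemigroup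

namespace BHL

/-- Piecewise syndetic subsets of `ℕ`: there is a gap bound `g` such that for every `N`
there is an interval `[x, x+N]` in which every point is within `g` of an element of `A`. -/
def PWS (A : Set ℕ) : Prop :=
  ∃ g : ℕ, ∀ N : ℕ, ∃ x : ℕ, ∀ w, x ≤ w → w ≤ x + N → ∃ δ, δ ≤ g ∧ w + δ ∈ A

lemma PWS.mono {A B : Set ℕ} (hAB : A ⊆ B) (h : PWS A) : PWS B := by
  obtain ⟨g, hg⟩ := h
  exact ⟨g, fun N => (hg N).imp fun x hx w hw hw' => (hx w hw hw').imp
    fun δ hδ => ⟨hδ.1, hAB hδ.2⟩⟩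

lemma pws_univ : PWS (Set.univ : Set ℕ) :=
  ⟨0, fun N => ⟨0, fun w _ _ => ⟨0, le_rfl, trivial⟩⟩⟩

lemma not_pws_of_bdd {A : Set ℕ} (m : ℕ) (hA : ∀ a ∈ A, a ≤ m) : ¬ PWS A := by
  rintro ⟨g, hg⟩
  obtain ⟨x, hx⟩ := hg (m + 1)
  obtain ⟨δ, -, hδA⟩ := hx (x + m + 1) (by omega) (by omega)
  have := hA _ hδA
  omega

lemma PWS.infinite {A : Set ℕ} (h : PWS A) : A.Infinite := by
  by_contra hfin
  rw [Set.not_infinite] at hfin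
  rcases hfin.bddAbove with ⟨m, hm⟩
  exact not_pws_of_bdd m (fun a ha => hm ha) h

lemma pws_union {A B : Set ℕ} (h : PWS (A ∪ B)) : PWS A ∨ PWS B := by
  by_cases hA : PWS A
  · exact Or.inl hA
  right
  obtain ⟨g, hg⟩ := h
  rw [PWS] at hA; push_neg at hA
  refine ⟨g, fun N => ?_⟩
  obtain ⟨N₂, hN₂⟩ := hA (N + g)
  obtain ⟨x₀, hx₀⟩ := hg (N₂ + N + g)
  obtain ⟨w₀, hw₀x, hw₀x', hw₀⟩ := hN₂ x₀
  refine ⟨w₀, fun w hw hw' => ?_⟩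
  obtain ⟨δ, hδ, hδAB⟩ := hx₀ w (le_trans hw₀x hw) (by omega)
  rcases hδAB with hA' | hB'
  · exfalso
    have heq : w + δ = w₀ + (w - w₀ + δ) := by omega
    exact hw₀ (w - w₀ + δ) (by omega) (by rwa [heq] at hA')
  · exact ⟨δ, hδ, hB'⟩

/-- translation: if the preimage of `A` under `m + ·` is PWS, so is `A`. -/
lemma PWS.of_shift {A : Set ℕ} (m : ℕ) (h : PWS {x | m + x ∈ A}) : PWS A := by
  obtain ⟨g, hg⟩ := h
  refine ⟨g, fun N => ?_⟩
  obtain ⟨x, hx⟩ := hg N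
  refine ⟨m + x, fun w hw hw' => ?_⟩
  obtain ⟨δ, hδ, hδA⟩ := hx (w - m) (by omega) (by omega)
  refine ⟨δ, hδ, ?_⟩
  have h2 : m + (w - m + δ) ∈ A := hδA
  have : m + (w - m + δ) = w + δ := by omega
  rwa [this] at h2

/-- The set of ultrafilters all of whose members are piecewise syndetic. -/
def K : Set (Ultrafilter ℕ) := {U | ∀ A ∈ U, PWS A}

lemma K_nonempty : K.Nonempty := by
  classical
  let F : Filter ℕ :=
    { sets := {A | ¬ PWS Aᶜ}
      univ_sets := by
        simp only [Set.mem_setOf_eq, Set.compl_univ]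
        exact not_pws_of_bdd 0 (fun a ha => absurd ha (Set.notMem_empty a))
      sets_of_superset := by
        intro A B hA hAB hB
        exact hA (hB.mono (Set.compl_subset_compl.mpr hAB))
      inter_sets := by
        intro A B hA hB hint
        rw [Set.compl_inter] at hint
        rcases pws_union hint with h | h
        exacts [hA h, hB h] }
  have hne : F.NeBot := by
    refine ⟨fun hbot => ?_⟩
    have hmem : (∅ : Set ℕ) ∈ F := by rw [hbot]; exact Filter.mem_bot
    have hnp : ¬ PWS ((∅ : Set ℕ)ᶜ) := hmem
    rw [Set.compl_empty] at hnp
    exact hnp pws_univ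
  haveI := hne
  obtain ⟨u, hu⟩ := Ultrafilter.exists_le F
  refine ⟨u, fun A hAu => ?_⟩
  by_contra hP
  have hAF : Aᶜ ∈ F := by
    show ¬ PWS Aᶜᶜ
    rwa [compl_compl]
  have : Aᶜ ∈ u := hu hAF
  rw [Ultrafilter.compl_mem_iff_notMem] at this
  exact this hAu

lemma K_isClosed : IsClosed K := by
  have hK : K = ⋂ (A : Set ℕ) (_ : ¬ PWS A), {U : Ultrafilter ℕ | Aᶜ ∈ U} := by
    ext U
    simp only [K, Set.mem_setOf_eq, Set.mem_iInter, Ultrafilter.compl_mem_iff_notMem]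
    constructor
    · intro h A hA hU
      exact hA (h A hU)
    · intro h A hAU
      by_contra hP
      exact h A hP hAU
  rw [hK]
  exact isClosed_iInter fun A => isClosed_iInter fun _ => ultrafilter_isClosed_basic _

lemma mem_add_iff {A : Set ℕ} (U V : Ultrafilter ℕ) :
    A ∈ U + V ↔ {m | {m' | m + m' ∈ A} ∈ V} ∈ U := by
  have h := Ultrafilter.eventually_add U V (· ∈ A)
  simpa only [Filter.eventually_iff, Ultrafilter.mem_coe, Set.setOf_mem_eq] using h

lemma K_add {U V : Ultrafilter ℕ} (hU : U ∈ K) (hV : V ∈ K) : U + V ∈ K := by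
  intro A hA
  rw [mem_add_iff] at hA
  obtain ⟨m₀, hm₀⟩ := Ultrafilter.nonempty_of_mem hA
  exact PWS.of_shift m₀ (hV _ hm₀)

theorem exists_pws_idem : ∃ p : Ultrafilter ℕ, p ∈ K ∧ p + p = p := by
  obtain ⟨p, hp, hidem⟩ := exists_idempotent_in_compact_add_subsemigroup
    (fun V => Ultrafilter.continuous_add_left V) K K_nonempty K_isClosed.isCompact
    (fun x hx y hy => K_add hx hy)
  exact ⟨p, hp, hidem⟩

section Star

variable (p : Ultrafilter ℕ) {C : Set ℕ}

/-- The star set of `C` relative to `p`. -/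
def St (C : Set ℕ) : Set ℕ := {x | x ∈ C ∧ {y | x + y ∈ C} ∈ p}

lemma St_subset (C : Set ℕ) : St p C ⊆ C := fun _ h => h.1

lemma St_mem (hp : p + p = p) (hC : C ∈ p) : St p C ∈ p := by
  have hT : {m | {m' | m + m' ∈ C} ∈ p} ∈ p := by
    rw [← mem_add_iff, hp]
    exact hC
  exact Filter.inter_mem hC hT

lemma St_step (hp : p + p = p) {x : ℕ} (hx : x ∈ St p C) :
    {y | x + y ∈ St p C} ∈ p := by
  obtain ⟨hx1, hx2⟩ := hx
  have h2 : {y | {z | (x + y) + z ∈ C} ∈ p} ∈ p := by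
    have hB : {y | {z | y + z ∈ {w | x + w ∈ C}} ∈ p} ∈ p := by
      rw [← mem_add_iff, hp]
      exact hx2
    have : ∀ y : ℕ, {z | y + z ∈ {w | x + w ∈ C}} = {z | (x + y) + z ∈ C} := by
      intro y; ext z; simp only [Set.mem_setOf_eq, add_assoc]
    simpa only [this] using hB
  have : {y | x + y ∈ St p C} = {y | x + y ∈ C} ∩ {y | {z | (x + y) + z ∈ C} ∈ p} := by
    ext y; rfl
  rw [this]
  exact Filter.inter_mem hx2 h2

end Star

/-- The Hales–Jewett based configuration lemma: in a piecewise syndetic set `D`, for every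
bound `M` and every sequence `z`, there are `b` and `W`, with `W` a finite sum of distinct
terms of `z`, such that `b + μ·W ∈ D` for all `μ ≤ M`. -/
lemma exists_config {D : Set ℕ} (hD : PWS D) (M : ℕ) (z : ℕ → ℕ) :
    ∃ (b W : ℕ) (S : Finset ℕ), S.Nonempty ∧ W = ∑ i ∈ S, z i ∧
      ∀ μ : ℕ, μ ≤ M → b + μ * W ∈ D := by
  classical
  obtain ⟨g, hg⟩ := hD
  obtain ⟨ι, ιfin, hHJ⟩ :=
    Combinatorics.Line.exists_mono_in_high_dimension (Fin (M + 1)) (Fin (g + 1))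
  haveI := ιfin
  set e : ι ≃ Fin (Fintype.card ι) := Fintype.equivFin ι with he
  set Z : ι → ℕ := fun i => z ((e i : ℕ)) with hZ
  set B' : ℕ := M * ∑ i : ι, Z i with hB'
  obtain ⟨x₀, hx₀⟩ := hg B'
  set val : (ι → Fin (M + 1)) → ℕ := fun wv => ∑ i : ι, (wv i : ℕ) * Z i with hval
  have hval_le : ∀ wv, val wv ≤ B' := by
    intro wv
    rw [hval, hB', Finset.mul_sum]
    apply Finset.sum_le_sum
    intro i _
    exact Nat.mul_le_mul_right _ (Nat.lt_succ_iff.mp (wv i).isLt)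
  have hex : ∀ wv : ι → Fin (M + 1), ∃ δ, δ ≤ g ∧ x₀ + val wv + δ ∈ D := by
    intro wv
    exact hx₀ (x₀ + val wv) (by omega) (by have := hval_le wv; omega)
  set col : (ι → Fin (M + 1)) → Fin (g + 1) := fun wv =>
    ⟨Nat.find (hex wv), by have := (Nat.find_spec (hex wv)).1; omega⟩ with hcol
  obtain ⟨l, c0, hc0⟩ := hHJ col
  set S₀ : Finset ι := Finset.univ.filter (fun i => l.idxFun i = none) with hS₀
  have hS₀ne : S₀.Nonempty := by
    obtain ⟨i, hi⟩ := l.proper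
    exact ⟨i, by simp [hS₀, hi]⟩
  set W' : ℕ := ∑ i ∈ S₀, Z i with hW'
  set F : ℕ := ∑ i ∈ S₀ᶜ, ((l.idxFun i).getD 0 : ℕ) * Z i with hF
  have hkey : ∀ x : Fin (M + 1), val (fun i => (l.idxFun i).getD x) = F + (x : ℕ) * W' := by
    intro x
    show (∑ i : ι, (((l.idxFun i).getD x : Fin (M+1)) : ℕ) * Z i) = F + (x:ℕ) * W'
    rw [← Finset.sum_add_sum_compl S₀]
    have h1 : ∑ i ∈ S₀, ((((l.idxFun i).getD x) : Fin (M+1)) : ℕ) * Z i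
        = (x : ℕ) * W' := by
      rw [hW', Finset.mul_sum]
      apply Finset.sum_congr rfl
      intro i hi
      have : l.idxFun i = none := by
        simpa [hS₀] using hi
      rw [this]
      rfl
    have h2 : ∑ i ∈ S₀ᶜ, ((((l.idxFun i).getD x) : Fin (M+1)) : ℕ) * Z i = F := by
      rw [hF]
      apply Finset.sum_congr rfl
      intro i hi
      have hnone : ¬ (l.idxFun i = none) := by
        simp only [hS₀, Finset.mem_compl, Finset.mem_filter, Finset.mem_univ,
          true_and] at hi
        exact hi
      obtain ⟨a, ha⟩ := Option.ne_none_iff_exists'.mp hnone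
      rw [ha]
      rfl
    rw [h1, h2]
    omega
  refine ⟨x₀ + F + (c0 : ℕ), W', S₀.image (fun i => (e i : ℕ)), hS₀ne.image _, ?_, ?_⟩
  · rw [Finset.sum_image (by intro a _ b _ hab; exact e.injective (Fin.val_injective hab))]
  · intro μ hμ
    set x : Fin (M + 1) := ⟨μ, by omega⟩ with hx
    have hmono := hc0 x
    have hfind : Nat.find (hex (l x)) = (c0 : ℕ) := by
      have : col (l x) = c0 := hmono
      have := congrArg (fun t : Fin (g+1) => (t : ℕ)) this
      simpa [hcol] using this
    have hspec := (Nat.find_spec (hex (l x))).2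
    rw [hfind] at hspec
    have hlx : val (l x) = F + μ * W' := by
      have h := hkey x
      have hcoe : (l x) = fun i => (l.idxFun i).getD x := rfl
      have hxv : (x : ℕ) = μ := rfl
      rw [hcoe, h, hxv]
    rw [hlx] at hspec
    have : x₀ + F + (c0 : ℕ) + μ * W' = x₀ + (F + μ * W') + (c0:ℕ) := by omega
    rwa [this]

/-- Finite instance of the (mixed-choice) Central Sets Theorem. -/
lemma cst {p : Ultrafilter ℕ} (hpK : p ∈ K) (hp : p + p = p) {C : Set ℕ} (hC : C ∈ p)
    (z : ℕ → ℕ) (M B : ℕ) :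
    ∃ b w : ℕ → ℕ,
      (∀ i, ∃ S : Finset ℕ, S.Nonempty ∧ w i = ∑ x ∈ S, z x) ∧
      (∀ G : Finset ℕ, G ⊆ Finset.range B → G.Nonempty →
        ∀ ν : ℕ → ℕ, (∀ i ∈ G, ν i ≤ M) → (∑ i ∈ G, (b i + ν i * w i)) ∈ C) := by
  classical
  suffices h : ∃ b w : ℕ → ℕ,
      (∀ i, ∃ S : Finset ℕ, S.Nonempty ∧ w i = ∑ x ∈ S, z x) ∧
      (∀ G : Finset ℕ, G ⊆ Finset.range B → G.Nonempty →
        ∀ ν : ℕ → ℕ, (∀ i ∈ G, ν i ≤ M) → (∑ i ∈ G, (b i + ν i * w i)) ∈ St p C) by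
    obtain ⟨b, w, h1, h2⟩ := h
    exact ⟨b, w, h1, fun G hG hGne ν hν => St_subset p C (h2 G hG hGne ν hν)⟩
  induction B with
  | zero =>
    refine ⟨fun _ => 0, fun _ => z 0, fun i => ⟨{0}, Finset.singleton_nonempty 0, by simp⟩, ?_⟩
    intro G hG hGne ν hν
    exfalso
    obtain ⟨i, hi⟩ := hGne
    simpa using hG hi
  | succ B ih =>
    obtain ⟨b, w, hw, hinv⟩ := ih
    set A : Set ℕ := {s | ∃ G : Finset ℕ, G ⊆ Finset.range B ∧ G.Nonempty ∧
      ∃ ν : ℕ → ℕ, (∀ i ∈ G, ν i ≤ M) ∧ s = ∑ i ∈ G, (b i + ν i * w i)} with hA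
    have hAsub : A ⊆ St p C := by
      rintro s ⟨G, hG, hGne, ν, hν, rfl⟩
      exact hinv G hG hGne ν hν
    have hAfin : A.Finite := by
      apply Set.Finite.subset (Set.finite_Iic (∑ i ∈ Finset.range B, (b i + M * w i)))
      rintro s ⟨G, hG, hGne, ν, hν, rfl⟩
      simp only [Set.mem_Iic]
      calc ∑ i ∈ G, (b i + ν i * w i) ≤ ∑ i ∈ G, (b i + M * w i) := by
            apply Finset.sum_le_sum
            intro i hi
            exact add_le_add_right (Nat.mul_le_mul_right (w i) (hν i hi)) (b i)
        _ ≤ ∑ i ∈ Finset.range B, (b i + M * w i) :=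
            Finset.sum_le_sum_of_subset hG
    set D : Set ℕ := St p C ∩ {x | ∀ s ∈ A, s + x ∈ St p C} with hD
    have hDp : D ∈ p := by
      apply Filter.inter_mem (St_mem p hp hC)
      have hi2 : {x | ∀ s ∈ A, s + x ∈ St p C} = ⋂ s ∈ A, {x | s + x ∈ St p C} := by
        ext x; simp
      rw [hi2]
      exact (Filter.biInter_mem hAfin).mpr (fun s hs => St_step p hp (hAsub hs))
    have hDpws : PWS D := hpK D hDp
    obtain ⟨β, Wn, S, hSne, hWS, hconf⟩ := exists_config hDpws M z
    refine ⟨Function.update b B β, Function.update w B Wn, ?_, ?_⟩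
    · intro i
      by_cases hiB : i = B
      · subst hiB; exact ⟨S, hSne, by rw [Function.update_self]; exact hWS⟩
      · rw [Function.update_of_ne hiB]; exact hw i
    · intro G hG hGne ν hν
      by_cases hBG : B ∈ G
      · have hGe : G.erase B ⊆ Finset.range B := by
          intro i hi
          have h1 := Finset.mem_of_mem_erase hi
          have h2 := Finset.ne_of_mem_erase hi
          have h3 := hG h1
          simp only [Finset.mem_range] at h3 ⊢
          omega
        have hsum : ∑ i ∈ G, (Function.update b B β i + ν i * Function.update w B Wn i)
            = (β + ν B * Wn) + ∑ i ∈ G.erase B, (b i + ν i * w i) := by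
          rw [← Finset.add_sum_erase _ _ hBG]
          congr 1
          · rw [Function.update_self, Function.update_self]
          · apply Finset.sum_congr rfl
            intro i hi
            have hiB : i ≠ B := Finset.ne_of_mem_erase hi
            rw [Function.update_of_ne hiB, Function.update_of_ne hiB]
        rw [hsum]
        have hmem : β + ν B * Wn ∈ D := hconf (ν B) (hν B hBG)
        rcases (G.erase B).eq_empty_or_nonempty with he | hne
        · rw [he]
          simpa using hmem.1
        · have hsA : (∑ i ∈ G.erase B, (b i + ν i * w i)) ∈ A :=
            ⟨G.erase B, hGe, hne, ν, fun i hi => hν i (Finset.mem_of_mem_erase hi), rfl⟩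
          have hfin := hmem.2 _ hsA
          rwa [add_comm] at hfin
      · have hGB : G ⊆ Finset.range B := by
          intro i hi
          have h3 := hG hi
          simp only [Finset.mem_range] at h3 ⊢
          have : i ≠ B := fun h => hBG (h ▸ hi)
          omega
        have hsum : ∑ i ∈ G, (Function.update b B β i + ν i * Function.update w B Wn i)
            = ∑ i ∈ G, (b i + ν i * w i) := by
          apply Finset.sum_congr rfl
          intro i hi
          have hiB : i ≠ B := by
            have h4 := hGB hi
            simp only [Finset.mem_range] at h4
            omega
          rw [Function.update_of_ne hiB, Function.update_of_ne hiB]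
        rw [hsum]
        exact hinv G hGB hGne ν hν

/-- `d` divides all differences of elements of `C`. -/
def DivAll (C : Set ℕ) (d : ℕ) : Prop := ∀ a ∈ C, ∀ b ∈ C, (d : ℤ) ∣ (b : ℤ) - (a : ℤ)

/-- Existence of the gcd of differences together with Bézout data. -/
lemma exists_gcd_bezout {C : Set ℕ} (hC : C.Infinite) :
    ∃ (u₀ d : ℕ) (F : Finset ℕ) (e : ℕ → ℤ),
      u₀ ∈ C ∧ 0 < d ∧ DivAll C d ∧ F.Nonempty ∧
      (∀ m ∈ F, 0 < m ∧ u₀ + m ∈ C ∧ (d:ℤ) ∣ (m:ℤ)) ∧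
      (∑ m ∈ F, e m * (m:ℤ)) = (d : ℤ) := by
  classical
  have hCne : C.Nonempty := hC.nonempty
  set u₀ := sInf C with hu₀
  have hu₀C : u₀ ∈ C := Nat.sInf_mem hCne
  have hu₀le : ∀ v ∈ C, u₀ ≤ v := fun v hv => Nat.sInf_le hv
  set Dif : Set ℕ := {m | 0 < m ∧ u₀ + m ∈ C} with hDif
  have hDifne : Dif.Nonempty := by
    obtain ⟨v, hvC, hvgt⟩ := hC.exists_gt u₀
    refine ⟨v - u₀, by omega, ?_⟩
    have hveq : u₀ + (v - u₀) = v := by omega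
    rw [hveq]; exact hvC
  set S : Set ℕ := {n | 0 < n ∧ ∃ (F : Finset ℕ) (e : ℕ → ℤ), (↑F : Set ℕ) ⊆ Dif ∧
    (∑ m ∈ F, e m * (m:ℤ)) = (n : ℤ)} with hS
  have hSne : S.Nonempty := by
    obtain ⟨m₀, hm₀⟩ := hDifne
    exact ⟨m₀, hm₀.1, {m₀}, fun _ => 1, by simpa using hm₀, by simp⟩
  set d := sInf S with hd
  have hdS : d ∈ S := Nat.sInf_mem hSne
  obtain ⟨hdpos, F, e, hFsub, hFsum⟩ := hdS
  have hdvd : ∀ m ∈ Dif, d ∣ m := by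
    intro m hm
    by_contra hnd
    have hr : 0 < m % d := Nat.pos_of_ne_zero (fun h => hnd (Nat.dvd_of_mod_eq_zero h))
    have hrS : m % d ∈ S := by
      refine ⟨hr, insert m F,
        fun x => (if x = m then 1 else 0) - ((m / d : ℕ) : ℤ) * (if x ∈ F then e x else 0), ?_, ?_⟩
      · rw [Finset.coe_insert]
        exact Set.insert_subset hm hFsub
      · have hsplit : ∀ x ∈ insert m F,
            ((if x = m then (1:ℤ) else 0) - ((m / d : ℕ) : ℤ) * (if x ∈ F then e x else 0)) * (x:ℤ)
            = (if x = m then (x:ℤ) else 0)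
              - ((m / d : ℕ) : ℤ) * ((if x ∈ F then e x else 0) * (x:ℤ)) := by
          intro x _
          by_cases hx : x = m
          · subst hx
            by_cases hxF : x ∈ F
            · simp [hxF]; try ring
            · simp [hxF]; try ring
          · by_cases hxF : x ∈ F
            · simp [hx, hxF]; try ring
            · simp [hx, hxF]; try ring
        rw [Finset.sum_congr rfl hsplit, Finset.sum_sub_distrib, ← Finset.mul_sum]
        have h1 : ∑ x ∈ insert m F, (if x = m then (x:ℤ) else 0) = (m:ℤ) := by
          rw [Finset.sum_ite_eq' (insert m F) m (fun x => (x:ℤ))]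
          simp
        have h2 : ∑ x ∈ insert m F, (if x ∈ F then e x else 0) * (x:ℤ)
            = ∑ x ∈ F, e x * (x:ℤ) := by
          have hv : ∀ x ∈ insert m F, x ∉ F → (if x ∈ F then e x else 0) * (x:ℤ) = 0 := by
            intro x _ hnx; rw [if_neg hnx, zero_mul]
          rw [← Finset.sum_subset (Finset.subset_insert m F) hv]
          apply Finset.sum_congr rfl
          intro x hx
          rw [if_pos hx]
        rw [h1, h2, hFsum]
        have hnat := Nat.mod_add_div m d
        have hcast : ((m % d : ℕ) : ℤ) + (d:ℤ) * ((m / d : ℕ) : ℤ) = (m:ℤ) := by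
          exact_mod_cast hnat
        linear_combination -hcast
    have h1 := Nat.sInf_le hrS
    have h2 := Nat.mod_lt m hdpos
    omega
  have hvdvd : ∀ v ∈ C, (d:ℤ) ∣ (v:ℤ) - (u₀:ℤ) := by
    intro v hv
    rcases eq_or_lt_of_le (hu₀le v hv) with heq | hlt
    · rw [← heq]; simp
    · have hmem : v - u₀ ∈ Dif := by
        refine ⟨by omega, ?_⟩
        have hveq : u₀ + (v - u₀) = v := by omega
        rw [hveq]; exact hv
      obtain ⟨t, ht⟩ := hdvd _ hmem
      exact ⟨t, by omega⟩
  refine ⟨u₀, d, F, e, hu₀C, hdpos, ?_, ?_, ?_, hFsum⟩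
  · intro a ha b hb
    have h1 := hvdvd a ha
    have h2 := hvdvd b hb
    have : (b:ℤ) - (a:ℤ) = ((b:ℤ) - u₀) - ((a:ℤ) - u₀) := by ring
    rw [this]
    exact dvd_sub h2 h1
  · rcases Finset.eq_empty_or_nonempty F with hF | hF
    · exfalso
      rw [hF] at hFsum
      simp at hFsum
      omega
    · exact hF
  · intro m hm
    have hmD : m ∈ Dif := hFsub hm
    obtain ⟨t, ht⟩ := hdvd _ hmD
    exact ⟨hmD.1, hmD.2, ⟨t, by exact_mod_cast ht⟩⟩

/-- Syndeticity of the difference set of a PWS set: differences hit every window `[W, W+g]`. -/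
lemma diff_syndetic {C : Set ℕ} {g : ℕ}
    (hg : ∀ N : ℕ, ∃ x : ℕ, ∀ w, x ≤ w → w ≤ x + N → ∃ δ, δ ≤ g ∧ w + δ ∈ C)
    (W : ℕ) : ∃ a b : ℕ, a ∈ C ∧ b ∈ C ∧ a + W ≤ b ∧ b ≤ a + W + g := by
  obtain ⟨x, hx⟩ := hg (W + 2 * g)
  obtain ⟨δ₁, hδ₁, ha⟩ := hx x le_rfl (by omega)
  obtain ⟨δ₂, hδ₂, hb⟩ := hx (x + δ₁ + W) (by omega) (by omega)
  exact ⟨x + δ₁, x + δ₁ + W + δ₂, ha, hb, by omega, by omega⟩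

/-- Summing a list with prescribed membership. -/
lemma exists_list_rep (C : Set ℕ) (F : Finset ℕ) (cnt val : ℕ → ℕ)
    (hval : ∀ m ∈ F, val m ∈ C) :
    ∃ l : List ℕ, (∀ x ∈ l, x ∈ C) ∧ l.length = ∑ m ∈ F, cnt m ∧
      l.sum = ∑ m ∈ F, cnt m * val m := by
  classical
  revert hval
  induction F using Finset.induction_on with
  | empty => intro _; exact ⟨[], by simp, by simp, by simp⟩
  | @insert a s ha ih =>
    intro hval
    obtain ⟨l, hl1, hl2, hl3⟩ := ih (fun m hm => hval m (Finset.mem_insert_of_mem hm))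
    refine ⟨List.replicate (cnt a) (val a) ++ l, ?_, ?_, ?_⟩
    · intro x hx
      rcases List.mem_append.mp hx with h | h
      · rw [List.eq_of_mem_replicate h]; exact hval a (Finset.mem_insert_self a s)
      · exact hl1 x h
    · rw [List.length_append, List.length_replicate, hl2, Finset.sum_insert ha]
    · rw [List.sum_append, List.sum_replicate, hl3, Finset.sum_insert ha, smul_eq_mul]

lemma list_getD_sum (l : List ℕ) (z : ℕ) :
    ∑ i ∈ Finset.range l.length, l.getD i z = l.sum := by
  induction l with
  | nil => simp
  | cons a l ih =>
    rw [List.length_cons, Finset.sum_range_succ', List.sum_cons]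
    simp only [List.getD_cons_succ, List.getD_cons_zero]
    rw [ih, add_comm]

lemma row_small (C : Set ℕ) (b w : ℕ → ℕ) (n₀ M₀ : ℕ) (cn : ℤ)
    (hconfig : ∀ G : Finset ℕ, G ⊆ Finset.range n₀ → G.Nonempty →
        ∀ ν : ℕ → ℕ, (∀ i ∈ G, ν i ≤ 2 * M₀) → (∑ i ∈ G, (b i + ν i * w i)) ∈ C)
    (n : ℕ) (hn : 1 ≤ n) (hnn₀ : n ≤ n₀) (hcn : cn.natAbs ≤ M₀) :
    ∃ f : ℕ → ℕ, (∀ j, 1 ≤ j → j ≤ n → f j ∈ C) ∧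
      ∃ t : ℕ, t ∈ C ∧ (∑ j ∈ Finset.Icc 1 n, (f j : ℤ)) + cn * (w 0 : ℤ) = (t : ℤ) := by
  classical
  have hcnle : -(M₀:ℤ) ≤ cn ∧ cn ≤ (M₀:ℤ) := by
    have habs : |cn| ≤ (M₀:ℤ) := by
      rw [Int.abs_eq_natAbs]
      exact_mod_cast hcn
    exact abs_le.mp habs
  set ν' : ℕ → ℕ := fun i => if i = 0 then ((M₀:ℤ) + cn).toNat else M₀ with hν'
  have hν'le : ∀ i ∈ Finset.range n, ν' i ≤ 2 * M₀ := by
    intro i _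
    by_cases hi : i = 0
    · simp only [hν', if_pos hi]
      rw [Int.toNat_le]
      push_cast
      omega
    · simp only [hν', if_neg hi]
      omega
  set f : ℕ → ℕ := fun j => b (j - 1) + M₀ * w (j - 1) with hf
  have hfC : ∀ j, 1 ≤ j → j ≤ n → f j ∈ C := by
    intro j h1 h2
    have hmem : j - 1 ∈ Finset.range n₀ := by
      rw [Finset.mem_range]; omega
    have := hconfig {j - 1} (by simpa using hmem) ⟨j - 1, Finset.mem_singleton_self _⟩
      (fun _ => M₀) (fun i _ => by show M₀ ≤ 2*M₀; omega)
    simpa using this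
  set t : ℕ := ∑ i ∈ Finset.range n, (b i + ν' i * w i) with ht
  have htC : t ∈ C :=
    hconfig (Finset.range n) (by intro i hi; rw [Finset.mem_range] at hi ⊢; omega)
      ⟨0, Finset.mem_range.mpr hn⟩ ν' hν'le
  refine ⟨f, hfC, t, htC, ?_⟩
  have hsum1 : (∑ j ∈ Finset.Icc 1 n, (f j : ℤ))
      = ∑ i ∈ Finset.range n, ((b i : ℤ) + (M₀:ℤ) * (w i : ℤ)) := by
    rw [← Finset.Ico_add_one_right_eq_Icc, Finset.sum_Ico_eq_sum_range]
    apply Finset.sum_congr (by norm_num)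
    intro i _
    have : (1 + i) - 1 = i := by omega
    simp only [hf, this]
    push_cast
    ring
  have h0mem : (0:ℕ) ∈ Finset.range n := Finset.mem_range.mpr hn
  have htz : (t:ℤ) = ∑ i ∈ Finset.range n, ((b i : ℤ) + (ν' i : ℤ) * (w i : ℤ)) := by
    rw [ht]
    push_cast
    rfl
  rw [hsum1, htz]
  rw [← Finset.add_sum_erase _ _ h0mem, ← Finset.add_sum_erase _ (fun i => (b i : ℤ) + (ν' i : ℤ) * (w i : ℤ)) h0mem]
  have htail : ∑ i ∈ (Finset.range n).erase 0, ((b i : ℤ) + (M₀:ℤ) * (w i : ℤ))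
      = ∑ i ∈ (Finset.range n).erase 0, ((b i : ℤ) + (ν' i : ℤ) * (w i : ℤ)) := by
    apply Finset.sum_congr rfl
    intro i hi
    have hi0 : i ≠ 0 := Finset.ne_of_mem_erase hi
    simp only [hν', if_neg hi0]
  have hν'0 : ((ν' 0 : ℕ) : ℤ) = (M₀:ℤ) + cn := by
    simp only [hν', if_pos rfl]
    rw [Int.toNat_of_nonneg (by omega)]
  rw [htail, hν'0]
  ring

lemma row_large (C : Set ℕ) (g : ℕ)
    (hg : ∀ N : ℕ, ∃ x : ℕ, ∀ w, x ≤ w → w ≤ x + N → ∃ δ, δ ≤ g ∧ w + δ ∈ C)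
    (u₀ d : ℕ) (hu₀C : u₀ ∈ C) (hdpos : 0 < d)
    (hdC : ∀ v ∈ C, (d:ℤ) ∣ (v:ℤ))
    (Fd : Finset ℕ) (e : ℕ → ℤ)
    (hFdmem : ∀ m ∈ Fd, 0 < m ∧ u₀ + m ∈ C ∧ (d:ℤ) ∣ (m:ℤ))
    (hFdsum : (∑ m ∈ Fd, e m * (m:ℤ)) = (d : ℤ))
    (y : ℕ) (hyC : y ∈ C) (cn : ℤ) (n : ℕ)
    (hn : 2 * (2*g+2) * (∑ m ∈ Fd, (e m).natAbs) + 2 ≤ n) :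
    ∃ f : ℕ → ℕ, (∀ j, 1 ≤ j → j ≤ n → f j ∈ C) ∧
      ∃ t : ℕ, t ∈ C ∧ (∑ j ∈ Finset.Icc 1 n, (f j : ℤ)) + cn * (y : ℤ) = (t : ℤ) := by
  classical
  obtain ⟨Q, hQ⟩ : ∃ q : ℕ, q = 2*g+2 := ⟨_, rfl⟩
  obtain ⟨Es, hEs⟩ : ∃ s : ℕ, s = ∑ m ∈ Fd, (e m).natAbs := ⟨_, rfl⟩
  obtain ⟨P, hP⟩ : ∃ s : ℕ, s = ∑ m ∈ Fd, (e m).natAbs * m := ⟨_, rfl⟩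
  have hn' : 2*Q*Es + 2 ≤ n := by rw [hQ, hEs]; exact hn
  have hdP : (d:ℤ) ∣ ((P:ℕ):ℤ) := by
    rw [hP]
    push_cast
    apply Finset.dvd_sum
    intro m hm
    exact Dvd.dvd.mul_left (hFdmem m hm).2.2 _
  have hdu : (d:ℤ) ∣ ((u₀:ℕ):ℤ) := hdC u₀ hu₀C
  have hdy : (d:ℤ) ∣ ((y:ℕ):ℤ) := hdC y hyC
  set V₀ : ℤ := ((n-1 : ℕ) : ℤ) * (u₀:ℤ) + (Q:ℤ) * (P:ℤ) + cn * (y:ℤ) with hV₀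
  have hdV : (d:ℤ) ∣ V₀ := by
    apply dvd_add (dvd_add _ _) _
    · exact Dvd.dvd.mul_left hdu _
    · exact Dvd.dvd.mul_left hdP _
    · exact Dvd.dvd.mul_left hdy _
  have hd1 : (1:ℤ) ≤ (d:ℤ) := by exact_mod_cast hdpos
  have hQz : ((Q:ℕ):ℤ) = 2*(g:ℤ)+2 := by rw [hQ]; push_cast; ring
  clear hn
  have hQd : 2*(g:ℤ) + 2 ≤ (Q:ℤ) * d := by
    have h2 : (Q:ℤ) * 1 ≤ (Q:ℤ) * d := by
      apply mul_le_mul_of_nonneg_left hd1 (by positivity)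
    linarith
  have hmain : ∃ (ρ : ℕ) (τ pe : ℕ), ρ ≤ Q ∧ τ ∈ C ∧ pe ∈ C ∧
      (τ : ℤ) = (pe : ℤ) + V₀ + (ρ:ℤ) * d := by
    by_cases hcase : (g:ℤ) + 1 ≤ V₀ + (Q:ℤ) * d
    · set X : ℤ := V₀ + (Q:ℤ) * d with hX
      have hdX : (d:ℤ) ∣ X := dvd_add hdV ⟨(Q:ℤ), by ring⟩
      set Wp : ℕ := (X - g).toNat with hWp
      have hWpz : (Wp:ℤ) = X - g := Int.toNat_of_nonneg (by linarith)
      obtain ⟨a1, b1, ha1, hb1, hab1, hab2⟩ := diff_syndetic hg Wp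
      have h1 : X - (g:ℤ) ≤ (b1:ℤ) - (a1:ℤ) := by
        have hc : (a1:ℤ) + Wp ≤ (b1:ℤ) := by exact_mod_cast hab1
        linarith
      have h2 : (b1:ℤ) - (a1:ℤ) ≤ X := by
        have hc : (b1:ℤ) ≤ (a1:ℤ) + Wp + g := by exact_mod_cast hab2
        linarith
      set E : ℤ := X - ((b1:ℤ) - (a1:ℤ)) with hE
      have hE0 : 0 ≤ E := by linarith
      have hEg : E ≤ (g:ℤ) := by linarith
      have hdE : (d:ℤ) ∣ E := dvd_sub hdX (dvd_sub (hdC b1 hb1) (hdC a1 ha1))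
      have hEnat : ((E.toNat : ℕ) : ℤ) = E := Int.toNat_of_nonneg hE0
      have hdEnat : d ∣ E.toNat := by
        have hzz : (d:ℤ) ∣ ((E.toNat:ℕ):ℤ) := by rw [hEnat]; exact hdE
        exact_mod_cast hzz
      set ρ0 : ℕ := E.toNat / d with hρ0
      have hρ0d : ρ0 * d = E.toNat := Nat.div_mul_cancel hdEnat
      have hρ0g : ρ0 ≤ g := by
        have h3 : E.toNat ≤ g := by
          have h4 : ((E.toNat:ℕ):ℤ) ≤ ((g:ℕ):ℤ) := by rw [hEnat]; exact hEg
          exact_mod_cast h4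
        calc ρ0 ≤ ρ0 * d := Nat.le_mul_of_pos_right ρ0 hdpos
          _ = E.toNat := hρ0d
          _ ≤ g := h3
      have hgQ : g ≤ Q := by omega
      have hρ0Q : ρ0 ≤ Q := le_trans hρ0g hgQ
      refine ⟨Q - ρ0, b1, a1, Nat.sub_le Q ρ0, hb1, ha1, ?_⟩
      have hcast : ((Q - ρ0 : ℕ) : ℤ) = (Q:ℤ) - (ρ0:ℤ) := by
        rw [Nat.cast_sub hρ0Q]
      have hEρ : ((ρ0:ℕ):ℤ) * (d:ℤ) = E := by
        rw [← hEnat, ← hρ0d]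
        push_cast
        ring
      rw [hcast]
      linarith [hEρ]
    · push_neg at hcase
      have hV₀neg : V₀ + (Q:ℤ)*d ≤ (g:ℤ) := by linarith
      set X : ℤ := -V₀ with hX
      have hdX : (d:ℤ) ∣ X := dvd_neg.mpr hdV
      have hXpos : (g:ℤ) + 1 ≤ X := by linarith
      set Wp : ℕ := (X - g).toNat with hWp
      have hWpz : (Wp:ℤ) = X - g := Int.toNat_of_nonneg (by linarith)
      obtain ⟨a1, b1, ha1, hb1, hab1, hab2⟩ := diff_syndetic hg Wp
      have h1 : X - (g:ℤ) ≤ (b1:ℤ) - (a1:ℤ) := by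
        have hc : (a1:ℤ) + Wp ≤ (b1:ℤ) := by exact_mod_cast hab1
        linarith
      have h2 : (b1:ℤ) - (a1:ℤ) ≤ X := by
        have hc : (b1:ℤ) ≤ (a1:ℤ) + Wp + g := by exact_mod_cast hab2
        linarith
      set E : ℤ := X - ((b1:ℤ) - (a1:ℤ)) with hE
      have hE0 : 0 ≤ E := by linarith
      have hEg : E ≤ (g:ℤ) := by linarith
      have hdE : (d:ℤ) ∣ E := dvd_sub hdX (dvd_sub (hdC b1 hb1) (hdC a1 ha1))
      have hEnat : ((E.toNat : ℕ) : ℤ) = E := Int.toNat_of_nonneg hE0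
      have hdEnat : d ∣ E.toNat := by
        have hzz : (d:ℤ) ∣ ((E.toNat:ℕ):ℤ) := by rw [hEnat]; exact hdE
        exact_mod_cast hzz
      set ρ0 : ℕ := E.toNat / d with hρ0
      have hρ0d : ρ0 * d = E.toNat := Nat.div_mul_cancel hdEnat
      have hρ0g : ρ0 ≤ g := by
        have h3 : E.toNat ≤ g := by
          have h4 : ((E.toNat:ℕ):ℤ) ≤ ((g:ℕ):ℤ) := by rw [hEnat]; exact hEg
          exact_mod_cast h4
        calc ρ0 ≤ ρ0 * d := Nat.le_mul_of_pos_right ρ0 hdpos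
          _ = E.toNat := hρ0d
          _ ≤ g := h3
      have hgQ : g ≤ Q := by omega
      refine ⟨ρ0, a1, b1, le_trans hρ0g hgQ, ha1, hb1, ?_⟩
      have hEρ : ((ρ0:ℕ):ℤ) * (d:ℤ) = E := by
        rw [← hEnat, ← hρ0d]
        push_cast
        ring
      linarith [hEρ]
  obtain ⟨ρ, τ, pe, hρQ, hτC, hpeC, hτeq⟩ := hmain
  set cnt : ℕ → ℕ := fun m => ((ρ:ℤ) * e m + (Q:ℤ) * |e m|).toNat with hcnt
  have hcnt_nonneg : ∀ m : ℕ, (0:ℤ) ≤ (ρ:ℤ) * e m + (Q:ℤ) * |e m| := by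
    intro m
    have h1 : |(ρ:ℤ) * e m| = (ρ:ℤ) * |e m| := by
      rw [abs_mul, abs_of_nonneg (by positivity : (0:ℤ) ≤ (ρ:ℤ))]
    have h2 : (ρ:ℤ) * |e m| ≤ (Q:ℤ) * |e m| :=
      mul_le_mul_of_nonneg_right (by exact_mod_cast hρQ) (abs_nonneg _)
    have h3 := neg_abs_le ((ρ:ℤ) * e m)
    linarith
  have hcntz : ∀ m : ℕ, ((cnt m : ℕ) : ℤ) = (ρ:ℤ) * e m + (Q:ℤ) * |e m| := by
    intro m
    rw [hcnt]
    exact Int.toNat_of_nonneg (hcnt_nonneg m)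
  have hcnt_le : ∀ m : ℕ, cnt m ≤ 2 * Q * (e m).natAbs := by
    intro m
    have hz : ((cnt m : ℕ):ℤ) ≤ ((2 * Q * (e m).natAbs : ℕ) : ℤ) := by
      rw [hcntz m]
      have hr : ((2 * Q * (e m).natAbs : ℕ) : ℤ) = 2 * (Q:ℤ) * |e m| := by
        push_cast [Int.natCast_natAbs]
        ring
      rw [hr]
      have h1 : |(ρ:ℤ) * e m| = (ρ:ℤ) * |e m| := by
        rw [abs_mul, abs_of_nonneg (by positivity : (0:ℤ) ≤ (ρ:ℤ))]
      have h2 : (ρ:ℤ) * |e m| ≤ (Q:ℤ) * |e m| :=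
        mul_le_mul_of_nonneg_right (by exact_mod_cast hρQ) (abs_nonneg _)
      have h3 := le_abs_self ((ρ:ℤ) * e m)
      linarith
    exact_mod_cast hz
  have hcntsum_le : (∑ m ∈ Fd, cnt m) ≤ 2 * Q * Es := by
    rw [hEs, Finset.mul_sum]
    exact Finset.sum_le_sum (fun m _ => hcnt_le m)
  have hcnt_val : ((∑ m ∈ Fd, cnt m * m : ℕ) : ℤ) = (ρ:ℤ) * (d:ℤ) + (Q:ℤ) * ((P:ℕ):ℤ) := by
    push_cast
    have hterm : ∀ m ∈ Fd, ((cnt m:ℕ):ℤ) * (m:ℤ) = (ρ:ℤ) * (e m * m) + (Q:ℤ) * (|e m| * m) := by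
      intro m _
      rw [hcntz m]; ring
    rw [Finset.sum_congr rfl hterm, Finset.sum_add_distrib, ← Finset.mul_sum, ← Finset.mul_sum,
      hFdsum]
    congr 1
    congr 1
    rw [hP]
    push_cast [Int.natCast_natAbs]
    rfl
  obtain ⟨l, hl1, hl2, hl3⟩ := exists_list_rep C Fd cnt (fun m => u₀ + m)
    (fun m hm => (hFdmem m hm).2.1)
  obtain ⟨T, hT⟩ : ∃ t : ℕ, t = ∑ m ∈ Fd, cnt m := ⟨_, rfl⟩
  have h5 : T ≤ 2*Q*Es := by rw [hT]; exact hcntsum_le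
  have hTn : T + 1 ≤ n - 1 := by omega
  have hlT : l.length = T := by rw [hT]; exact hl2
  set l2 : List ℕ := l ++ List.replicate ((n-1) - T) u₀ with hl2def
  have hl2len : l2.length = n - 1 := by
    rw [hl2def, List.length_append, List.length_replicate, hlT]
    omega
  have hl2mem : ∀ x ∈ l2, x ∈ C := by
    intro x hx
    rcases List.mem_append.mp hx with h | h
    · exact hl1 x h
    · rw [List.eq_of_mem_replicate h]; exact hu₀C
  have hl2sumN : l2.sum = (n-1) * u₀ + (∑ m ∈ Fd, cnt m * m) := by
    rw [hl2def, List.sum_append, List.sum_replicate, smul_eq_mul, hl3]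
    have h1 : ∑ m ∈ Fd, cnt m * (u₀ + m) = T * u₀ + ∑ m ∈ Fd, cnt m * m := by
      rw [hT, Finset.sum_mul, ← Finset.sum_add_distrib]
      apply Finset.sum_congr rfl
      intro m _
      ring
    rw [h1]
    have h2 : T + ((n-1) - T) = n - 1 := by omega
    calc T * u₀ + (∑ m ∈ Fd, cnt m * m) + ((n-1) - T) * u₀
        = (T + ((n-1)-T)) * u₀ + ∑ m ∈ Fd, cnt m * m := by ring
      _ = (n-1) * u₀ + ∑ m ∈ Fd, cnt m * m := by rw [h2]
  have hl2sumZ : ((l2.sum : ℕ):ℤ) = ((n-1:ℕ):ℤ) * (u₀:ℤ) + ((ρ:ℤ)*(d:ℤ) + (Q:ℤ)*((P:ℕ):ℤ)) := by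
    rw [hl2sumN, Nat.cast_add, Nat.cast_mul, hcnt_val]
  set f : ℕ → ℕ := fun j => if j ≤ 1 then pe else l2.getD (j-2) u₀ with hfdef
  have hfmem : ∀ j, 1 ≤ j → j ≤ n → f j ∈ C := by
    intro j hj1 hjn
    by_cases hj : j ≤ 1
    · simp only [hfdef, if_pos hj]; exact hpeC
    · simp only [hfdef, if_neg hj]
      have hidx : j - 2 < l2.length := by rw [hl2len]; omega
      rw [List.getD_eq_getElem _ _ hidx]
      exact hl2mem _ (List.getElem_mem hidx)
  refine ⟨f, hfmem, τ, hτC, ?_⟩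
  have hsum : (∑ j ∈ Finset.Icc 1 n, ((f j : ℕ) : ℤ)) = (pe:ℤ) + ((l2.sum:ℕ):ℤ) := by
    rw [← Finset.Ico_add_one_right_eq_Icc, Finset.sum_Ico_eq_sum_range]
    have hrange : n + 1 - 1 = n := by omega
    rw [hrange]
    have hn1 : n = (n-1) + 1 := by omega
    have hconv : ∑ i ∈ Finset.range n, ((f (1+i) : ℕ):ℤ)
        = ∑ i ∈ Finset.range ((n-1)+1), ((f (1+i):ℕ):ℤ) := by
      rw [← hn1]
    rw [hconv, Finset.sum_range_succ']
    have hf0 : f (1+0) = pe := by simp [hfdef]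
    have hfi : ∀ i ∈ Finset.range (n-1), ((f (1+(i+1)):ℕ):ℤ) = ((l2.getD i u₀ : ℕ):ℤ) := by
      intro i _
      have hii : ¬ (1 + (i+1) ≤ 1) := by omega
      simp only [hfdef, if_neg hii]
      congr 2
      omega
    rw [Finset.sum_congr rfl hfi, hf0]
    have hgd := list_getD_sum l2 u₀
    rw [hl2len] at hgd
    have hZ : ∑ i ∈ Finset.range (n-1), ((l2.getD i u₀ : ℕ):ℤ) = ((l2.sum:ℕ):ℤ) := by
      rw [← hgd]
      push_cast
      rfl
    rw [hZ]
    ring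
  rw [hsum, hl2sumZ, hτeq, hV₀]
  ring

theorem main (c : ℕ → ℤ) (r : ℕ) (hr : 1 ≤ r) (χ : ℕ → Fin r) :
    ∃ (k : Fin r) (y : ℕ), (0 < y ∧ χ y = k) ∧
      ∀ n : ℕ, 1 ≤ n → ∃ f : ℕ → ℕ,
        (∀ j, 1 ≤ j → j ≤ n → (0 < f j ∧ χ (f j) = k)) ∧
        ∃ t : ℕ, 0 < t ∧ χ t = k ∧
          (∑ j ∈ Finset.Icc 1 n, (f j : ℤ)) + c n * (y : ℤ) = (t : ℤ) := by
  classical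
  obtain ⟨p, hpK, hp⟩ := exists_pws_idem
  have hpos : {n : ℕ | 1 ≤ n} ∈ p := by
    have h0 : ({0} : Set ℕ) ∉ p := fun h => not_pws_of_bdd 0 (fun a ha => by simpa using ha) (hpK _ h)
    have hc : {n : ℕ | 1 ≤ n} = ({0} : Set ℕ)ᶜ := by
      ext n
      simp [Nat.one_le_iff_ne_zero]
    rw [hc, Ultrafilter.compl_mem_iff_notMem]
    exact h0
  have hU : (⋃ k ∈ (Set.univ : Set (Fin r)), {n : ℕ | 1 ≤ n ∧ χ n = k}) ∈ p := by
    have hcov : {n : ℕ | 1 ≤ n} ⊆ ⋃ k ∈ (Set.univ : Set (Fin r)), {n : ℕ | 1 ≤ n ∧ χ n = k} := by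
      intro n hn
      exact Set.mem_biUnion (Set.mem_univ (χ n)) ⟨hn, rfl⟩
    exact Ultrafilter.mem_coe.mp (Filter.mem_of_superset (Ultrafilter.mem_coe.mpr hpos) hcov)
  obtain ⟨k, -, hk⟩ := (Ultrafilter.finite_biUnion_mem_iff (Set.finite_univ)).mp hU
  set C : Set ℕ := {n | 1 ≤ n ∧ χ n = k} with hCdef
  have hCp : C ∈ p := hk
  have hCpws : PWS C := hpK _ hCp
  have hCinf : C.Infinite := hCpws.infinite
  obtain ⟨a, hFS⟩ := Hindman.exists_FS_of_large p hp C hCp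
  set z : ℕ → ℕ := fun i => a.get i with hz
  have hzsum : ∀ S : Finset ℕ, S.Nonempty → (∑ i ∈ S, z i) ∈ C := by
    intro S hS
    exact hFS (Hindman.FS.finset_sum a S hS)
  obtain ⟨u₀, d, Fd, e, hu₀C, hdpos, hdiv, hFdne, hFdmem, hFdsum⟩ := exists_gcd_bezout hCinf
  have hdu₀ : (d:ℤ) ∣ (u₀:ℤ) := by
    have key : ∀ j l : ℕ, j < l →
        (∑ i ∈ Finset.range (j+1), z i) % d = (∑ i ∈ Finset.range (l+1), z i) % d →
        (d:ℤ) ∣ (u₀:ℤ) := by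
      intro j l hjl heq
      set s : ℕ := ∑ i ∈ Finset.Ico (j+1) (l+1), z i with hs
      have hsC : s ∈ C := by
        apply hzsum
        rw [Finset.nonempty_Ico]
        omega
      have hsum : (∑ i ∈ Finset.range (j+1), z i) + s = ∑ i ∈ Finset.range (l+1), z i := by
        rw [hs]
        exact Finset.sum_range_add_sum_Ico _ (by omega)
      have hds : (d:ℤ) ∣ (s:ℤ) := by
        have hmod : (∑ i ∈ Finset.range (j+1), z i) ≡ (∑ i ∈ Finset.range (l+1), z i) [MOD d] :=
          heq
        have hdvd := (Nat.modEq_iff_dvd).mp hmod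
        have hcast : ((∑ i ∈ Finset.range (j+1), z i : ℕ):ℤ) + (s:ℤ)
            = ((∑ i ∈ Finset.range (l+1), z i : ℕ):ℤ) := by exact_mod_cast hsum
        have heq2 : ((∑ i ∈ Finset.range (l+1), z i : ℕ):ℤ)
            - ((∑ i ∈ Finset.range (j+1), z i : ℕ):ℤ) = (s:ℤ) := by linarith
        rwa [heq2] at hdvd
      have hds2 : (d:ℤ) ∣ (s:ℤ) - (u₀:ℤ) := hdiv u₀ hu₀C s hsC
      have hfin : (d:ℤ) ∣ ((s:ℤ) - ((s:ℤ) - (u₀:ℤ))) := dvd_sub hds hds2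
      simpa using hfin
    have hmaps : ∀ j ∈ Finset.range (d+1),
        (∑ i ∈ Finset.range (j+1), z i) % d ∈ Finset.range d := by
      intro j _
      exact Finset.mem_range.mpr (Nat.mod_lt _ hdpos)
    obtain ⟨j, hj, l, hl, hjl, heq⟩ :=
      Finset.exists_ne_map_eq_of_card_lt_of_maps_to (by simp) hmaps
    rcases Ne.lt_or_gt hjl with h | h
    · exact key j l h heq
    · exact key l j h heq.symm
  have hdC : ∀ v ∈ C, (d:ℤ) ∣ (v:ℤ) := by
    intro v hv
    have h1 := hdiv u₀ hu₀C v hv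
    have h2 : (v:ℤ) = ((v:ℤ) - (u₀:ℤ)) + (u₀:ℤ) := by ring
    rw [h2]
    exact dvd_add h1 hdu₀
  obtain ⟨g, hg⟩ := hCpws
  obtain ⟨n₀, hn₀⟩ : ∃ n₀ : ℕ, n₀ = 2 * (2*g+2) * (∑ m ∈ Fd, (e m).natAbs) + 2 := ⟨_, rfl⟩
  obtain ⟨M₀, hM₀⟩ : ∃ M₀ : ℕ, M₀ = Finset.sup (Finset.Icc 1 n₀) (fun i => (c i).natAbs) :=
    ⟨_, rfl⟩
  obtain ⟨b, w, hwFS, hconfig⟩ := cst hpK hp hCp z (2 * M₀) n₀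
  have hw0C : w 0 ∈ C := by
    obtain ⟨S, hSne, hSsum⟩ := hwFS 0
    rw [hSsum]
    exact hzsum S hSne
  refine ⟨k, w 0, ⟨lt_of_lt_of_le Nat.zero_lt_one hw0C.1, hw0C.2⟩, ?_⟩
  intro n hn
  by_cases hcase : n ≤ n₀
  · have hcn : (c n).natAbs ≤ M₀ := by
      rw [hM₀]
      exact Finset.le_sup (f := fun i => (c i).natAbs) (Finset.mem_Icc.mpr ⟨hn, hcase⟩)
    obtain ⟨f, hfC, t, htC, hteq⟩ := row_small C b w n₀ M₀ (c n) hconfig n hn hcase hcn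
    exact ⟨f, fun j h1 h2 => ⟨lt_of_lt_of_le Nat.zero_lt_one (hfC j h1 h2).1, (hfC j h1 h2).2⟩,
      t, lt_of_lt_of_le Nat.zero_lt_one htC.1, htC.2, hteq⟩
  · push_neg at hcase
    obtain ⟨f, hfC, t, htC, hteq⟩ := row_large C g hg u₀ d hu₀C hdpos hdC Fd e hFdmem hFdsum
      (w 0) hw0C (c n) n (by rw [← hn₀]; omega)
    exact ⟨f, fun j h1 h2 => ⟨lt_of_lt_of_le Nat.zero_lt_one (hfC j h1 h2).1, (hfC j h1 h2).2⟩,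
      t, lt_of_lt_of_le Nat.zero_lt_one htC.1, htC.2, hteq⟩

end BHL

/-- **Barber–Hindman–Leader system is image partition regular.**
For every sequence of integer coefficients `(c_n)`, the system with variables
`y` and `x_{ij}` (`1 ≤ j ≤ i`) consisting of the expressions
`S_i = x_{i1} + ⋯ + x_{ii} + c_i·y` for every `i ≥ 1`, together with every
variable `x_{ij}` and `y`, is image partition regular: for every `r ≥ 1` and
every colouring `χ : ℕ → Fin r`, there are integer values of the variables
such that `y`, every `x_{ij}`, and every `S_i` are positive and all receive
the same colour. -/
theorem bhl_system_image_partition_regular (c : ℕ → ℤ) :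
    ∀ r : ℕ, 1 ≤ r → ∀ χ : ℕ → Fin r,
      ∃ (y : ℤ) (x : ℕ → ℕ → ℤ) (k : Fin r),
        (0 < y ∧ χ y.toNat = k) ∧
        (∀ i j : ℕ, 1 ≤ j → j ≤ i → 0 < x i j ∧ χ (x i j).toNat = k) ∧
        (∀ i : ℕ, 1 ≤ i →
          0 < (∑ j ∈ Finset.Icc 1 i, x i j) + c i * y ∧
          χ ((∑ j ∈ Finset.Icc 1 i, x i j) + c i * y).toNat = k) := by
  intro r hr χ
  obtain ⟨k, y, ⟨hy0, hyk⟩, hrows⟩ := BHL.main c r hr χ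
  choose f hf t ht0 htk hteq using hrows
  refine ⟨(y : ℤ), fun i j => if h : 1 ≤ i then (f i h j : ℤ) else 1, k, ⟨by exact_mod_cast hy0, by simpa using hyk⟩, ?_, ?_⟩
  · intro i j hj hji
    have hi : 1 ≤ i := le_trans hj hji
    simp only [dif_pos hi]
    obtain ⟨h1, h2⟩ := hf i hi j hj hji
    exact ⟨by exact_mod_cast h1, by simpa using h2⟩
  · intro i hi
    have hsum : (∑ j ∈ Finset.Icc 1 i, (if h : 1 ≤ i then (f i h j : ℤ) else 1))
        = ∑ j ∈ Finset.Icc 1 i, (f i hi j : ℤ) := by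
      apply Finset.sum_congr rfl
      intro j _
      rw [dif_pos hi]
    rw [hsum, hteq i hi]
    constructor
    · exact_mod_cast ht0 i hi
    · simpa using htk i hi
end

section
/- Let (c_n)_{n≥1} be a sequence of integers satisfying c_n·n ≡ 2^{n-1} (mod 2^n) for every n ≥ 1. Then there exists a 2-colouring χ : ℕ → Fin 2 such that there do NOT exist integers y and x_{ij} (1 ≤ j ≤ i) with the properties: 2^i divides x_{ij} for all i, j; and y, every x_{ij}, and every S_i = x_{i1} + ... + x_{ii} + c_i·y are positive natural numbers all of the same colour under χ. -/
open Fin.NatCast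

private def badf (n : ℕ) : Fin 2 :=
  (((n.factorization 2 + 1) / 2 ^ ((n.factorization 2 + 1).factorization 2) / 2 : ℕ) : Fin 2)

private lemma fact2 (t q : ℕ) (hq : Odd q) : (2 ^ t * q).factorization 2 = t := by
  have hq0 : q ≠ 0 := by rintro rfl; simp at hq
  have h2 : ¬ (2 ∣ q) := by
    rw [Nat.odd_iff] at hq; omega
  rw [Nat.factorization_mul (by positivity) hq0]
  simp [Nat.Prime.factorization_pow, Nat.prime_two,
    Nat.factorization_eq_zero_of_not_dvd h2]

private lemma key (c : ℕ → ℤ)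
    (hc : ∀ n : ℕ, 1 ≤ n → c n * (n : ℤ) ≡ 2 ^ (n - 1) [ZMOD 2 ^ n])
    (y : ℤ) (x : ℕ → ℕ → ℤ)
    (hdvd : ∀ i j : ℕ, 1 ≤ j → j ≤ i → (2 : ℤ) ^ i ∣ x i j)
    (v u : ℕ) (hu : Odd u) (hy2 : y = 2 ^ v * (u : ℤ))
    (w : ℕ) (hw : Odd w)
    (hSpos : 0 < (∑ j ∈ Finset.Icc 1 (2 ^ v * w), x (2 ^ v * w) j) + c (2 ^ v * w) * y) :
    badf ((∑ j ∈ Finset.Icc 1 (2 ^ v * w), x (2 ^ v * w) j) + c (2 ^ v * w) * y).toNat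
      = ((w / 2 : ℕ) : Fin 2) := by
  set i := 2 ^ v * w with hi
  have hw0 : w ≠ 0 := by rintro rfl; simp at hw
  have hi1 : 1 ≤ i := by
    have : 1 ≤ 2 ^ v := Nat.one_le_two_pow
    calc 1 = 1 * 1 := rfl
    _ ≤ 2 ^ v * w := Nat.mul_le_mul this (by omega)
  set A := ∑ j ∈ Finset.Icc 1 i, x i j with hA
  have hAdvd : (2 : ℤ) ^ i ∣ A := by
    apply Finset.dvd_sum
    intro j hj
    rw [Finset.mem_Icc] at hj
    exact hdvd i j hj.1 hj.2
  obtain ⟨a, ha⟩ := hAdvd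
  obtain ⟨t, ht⟩ := (hc i hi1).dvd
  -- ht : 2^(i-1) - c i * i = 2^i * t
  have hct : c i * ((2:ℤ) ^ v * (w:ℕ)) = 2 ^ (i-1) - 2 ^ i * t := by
    have : ((i : ℕ) : ℤ) = (2:ℤ) ^ v * (w:ℕ) := by push_cast [hi]; ring
    rw [← this]; linarith [ht]
  have hpow : (2:ℤ) ^ i = 2 * 2 ^ (i-1) := by
    rw [← pow_succ']
    congr 1
    omega
  set S := A + c i * y with hS
  set r : ℤ := (1 - 2*t) * u + 2 * (w * a) with hr
  have hkey : (w : ℤ) * S = 2 ^ (i-1) * r := by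
    rw [hS, hr, ha, hy2]
    have hct' : (w:ℤ) * (c i * (2 ^ v * (u : ℤ))) = (2 ^ (i-1) - 2 ^ i * t) * u := by
      rw [← hct]; ring
    rw [mul_add, hct', hpow]
    ring
  have hcop : IsCoprime ((2:ℤ) ^ (i-1)) (w : ℤ) := by
    apply IsCoprime.pow_left
    rw [Int.prime_two.coprime_iff_not_dvd]
    obtain ⟨m, rfl⟩ := hw
    intro h
    obtain ⟨d, hd⟩ := h
    push_cast at hd
    omega
  have hdvdS : (2:ℤ) ^ (i-1) ∣ S := by
    apply hcop.dvd_of_dvd_mul_left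
    exact ⟨r, hkey⟩
  obtain ⟨q, hq⟩ := hdvdS
  have hwq : (w : ℤ) * q = r := by
    have h20 : ((2:ℤ) ^ (i-1)) ≠ 0 := by positivity
    apply mul_left_cancel₀ h20
    rw [← hkey, hq]; ring
  have hrodd : Odd r := by
    rw [hr]
    refine Odd.add_even (Odd.mul ⟨-t, by ring⟩ ?_) (even_two_mul _)
    exact_mod_cast hu
  have hqodd : Odd q := (Int.odd_mul.mp (hwq ▸ hrodd)).2
  have hqpos : 0 < q := by
    rcases le_or_gt q 0 with h | h
    · exfalso
      have h2 : (0:ℤ) < 2 ^ (i-1) := by positivity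
      nlinarith [hq, hSpos]
    · exact h
  have hSN : S.toNat = 2 ^ (i-1) * q.toNat := by
    have h1 : (S.toNat : ℤ) = ((2 ^ (i-1) * q.toNat : ℕ) : ℤ) := by
      push_cast
      rw [Int.toNat_of_nonneg hSpos.le, Int.toNat_of_nonneg hqpos.le]
      exact hq
    exact_mod_cast h1
  have hqN : Odd q.toNat := by
    rcases hqodd with ⟨m, hm⟩
    refine ⟨m.toNat, ?_⟩
    omega
  have hfS : S.toNat.factorization 2 = i - 1 := by
    rw [hSN]; exact fact2 _ _ hqN
  rw [badf, hfS]
  have hi1' : i - 1 + 1 = i := by omega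
  rw [hi1', hi, fact2 v w hw, Nat.mul_div_cancel_left _ (by positivity)]


/-- **Proposition (bad colouring).**
Let `(c_n)` be a sequence of integers with `c_n·n ≡ 2^(n-1) (mod 2^n)` for all
`n ≥ 1`. Then there is a 2-colouring `χ : ℕ → Fin 2` for which there are no
integers `y` and `x_{ij}` (`1 ≤ j ≤ i`) with `2^i ∣ x_{ij}` for all `i, j`,
such that `y`, every `x_{ij}`, and every
`S_i = x_{i1} + ⋯ + x_{ii} + c_i·y` are positive and monochromatic. -/
theorem no_monochromatic_image_with_divisibility (c : ℕ → ℤ)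
    (hc : ∀ n : ℕ, 1 ≤ n → c n * (n : ℤ) ≡ 2 ^ (n - 1) [ZMOD 2 ^ n]) :
    ∃ χ : ℕ → Fin 2,
      ¬ ∃ (y : ℤ) (x : ℕ → ℕ → ℤ) (k : Fin 2),
        (∀ i j : ℕ, 1 ≤ j → j ≤ i → (2 : ℤ) ^ i ∣ x i j) ∧
        (0 < y ∧ χ y.toNat = k) ∧
        (∀ i j : ℕ, 1 ≤ j → j ≤ i → 0 < x i j ∧ χ (x i j).toNat = k) ∧
        (∀ i : ℕ, 1 ≤ i →
          0 < (∑ j ∈ Finset.Icc 1 i, x i j) + c i * y ∧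
          χ ((∑ j ∈ Finset.Icc 1 i, x i j) + c i * y).toNat = k) := by
  refine ⟨badf, ?_⟩
  rintro ⟨y, x, k, hdvd, ⟨hy, -⟩, -, hS⟩
  obtain ⟨v, u, hu, hyu⟩ := Nat.exists_eq_two_pow_mul_odd
    (show y.toNat ≠ 0 by omega)
  have hy2 : y = 2 ^ v * (u : ℤ) := by
    have := Int.toNat_of_nonneg hy.le
    rw [hyu] at this
    push_cast at this
    linarith
  have hi1 : ∀ w : ℕ, w ≠ 0 → 1 ≤ 2 ^ v * w := by
    intro w hw
    have : 1 ≤ 2 ^ v := Nat.one_le_two_pow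
    calc 1 = 1 * 1 := rfl
    _ ≤ 2 ^ v * w := Nat.mul_le_mul this (by omega)
  have h1 := key c hc y x hdvd v u hu hy2 1 odd_one
    (hS (2 ^ v * 1) (hi1 1 one_ne_zero)).1
  have h3 := key c hc y x hdvd v u hu hy2 3 (by decide)
    (hS (2 ^ v * 3) (hi1 3 (by omega))).1
  have e1 := (hS (2 ^ v * 1) (hi1 1 one_ne_zero)).2
  have e3 := (hS (2 ^ v * 3) (hi1 3 (by omega))).2
  rw [h1] at e1
  rw [h3] at e3
  rw [← e1] at e3
  norm_num at e3
end

section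
/- Let (c_n)_{n≥1} be a sequence of integers satisfying c_n·n ≡ 2^{n-1} (mod 2^n) for every n ≥ 1. Then the rescaled system with variables y and z_{ij} (1 ≤ j ≤ i), whose expressions are T_i = 2^i·z_{i1} + ... + 2^i·z_{ii} + c_i·y for each i ≥ 1, together with each 2^i·z_{ij} and y, is NOT image partition regular: there exists a 2-colouring χ : ℕ → Fin 2 such that no integers y and z_{ij} make y, every 2^i·z_{ij}, and every T_i positive natural numbers all of the same colour under χ. -/
lemma aux_val (n u y' t : ℕ) (hn : 1 ≤ n) (hu : ¬ 2 ∣ u) (hy' : ¬ 2 ∣ y') (ht : t ≠ 0)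
    (hdvd : (2:ℤ) ^ n ∣ ((u:ℤ) * t - 2 ^ (n-1) * (y':ℤ))) : padicValNat 2 t = n - 1 := by
  haveI : Fact (Nat.Prime 2) := ⟨Nat.prime_two⟩
  have hu0 : u ≠ 0 := by rintro rfl; exact hu (dvd_zero 2)
  have hut : u * t ≠ 0 := mul_ne_zero hu0 ht
  have h1 : (2:ℤ) ^ (n-1) ∣ ((u:ℤ) * t) := by
    have e : (u:ℤ) * t = ((u:ℤ) * t - 2 ^ (n-1) * y') + 2 ^ (n-1) * y' := by ring
    rw [e]
    exact dvd_add ((pow_dvd_pow 2 (Nat.sub_le n 1)).trans hdvd) (dvd_mul_right _ _)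
  have h1' : 2 ^ (n-1) ∣ u * t := by exact_mod_cast h1
  have h2 : ¬ 2 ^ n ∣ u * t := by
    intro h
    have h' : (2:ℤ) ^ n ∣ (u:ℤ) * t := by exact_mod_cast h
    have h'' : (2:ℤ) ^ n ∣ 2 ^ (n-1) * (y':ℤ) := by
      have e : (2:ℤ) ^ (n-1) * (y':ℤ) = (u:ℤ) * t - ((u:ℤ) * t - 2 ^ (n-1) * y') := by ring
      rw [e]; exact dvd_sub h' hdvd
    have hn' : (2:ℤ) ^ n = 2 ^ (n-1) * 2 := by rw [← pow_succ]; congr 1; omega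
    rw [hn'] at h''
    have : (2:ℤ) ∣ (y':ℤ) :=
      (mul_dvd_mul_iff_left (a := (2:ℤ) ^ (n-1)) (pow_ne_zero _ two_ne_zero)).mp h''
    exact hy' (by exact_mod_cast this)
  have hle : n - 1 ≤ padicValNat 2 (u * t) := (padicValNat_dvd_iff_le hut).mp h1'
  have hlt : padicValNat 2 (u * t) < n := by
    by_contra h
    exact h2 ((padicValNat_dvd_iff_le hut).mpr (not_lt.mp h))
  have hval : padicValNat 2 (u * t) = n - 1 := by omega
  rw [padicValNat.mul hu0 ht, padicValNat.eq_zero_of_not_dvd hu, zero_add] at hval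
  exact hval

/-- **The rescaled system is not image partition regular.**
Let `(c_n)` satisfy `c_n·n ≡ 2^(n-1) (mod 2^n)` for every `n ≥ 1`. Then the
rescaled system with variables `y` and `z_{ij}` (`1 ≤ j ≤ i`), whose
expressions are `T_i = 2^i·z_{i1} + ⋯ + 2^i·z_{ii} + c_i·y` for each `i ≥ 1`,
each `2^i·z_{ij}`, and `y`, is not image partition regular: there is a
2-colouring `χ : ℕ → Fin 2` under which no integer values of the variables
make `y`, every `2^i·z_{ij}`, and every `T_i` positive and monochromatic. -/
theorem rescaled_system_not_image_partition_regular (c : ℕ → ℤ)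
    (hc : ∀ n : ℕ, 1 ≤ n → c n * (n : ℤ) ≡ 2 ^ (n - 1) [ZMOD 2 ^ n]) :
    ∃ χ : ℕ → Fin 2,
      ¬ ∃ (y : ℤ) (z : ℕ → ℕ → ℤ) (k : Fin 2),
        (0 < y ∧ χ y.toNat = k) ∧
        (∀ i j : ℕ, 1 ≤ j → j ≤ i →
          0 < (2 : ℤ) ^ i * z i j ∧ χ ((2 : ℤ) ^ i * z i j).toNat = k) ∧
        (∀ i : ℕ, 1 ≤ i →
          0 < (∑ j ∈ Finset.Icc 1 i, (2 : ℤ) ^ i * z i j) + c i * y ∧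
          χ ((∑ j ∈ Finset.Icc 1 i, (2 : ℤ) ^ i * z i j) + c i * y).toNat = k) := by
  classical
  set P : ℕ → Prop := fun v => ∃ w : ℕ, v + 1 = 3 * 2 ^ w with hP_def
  refine ⟨fun m => if P (padicValNat 2 m) then 1 else 0, ?_⟩
  rintro ⟨y, z, k, ⟨hy, hyk⟩, -, hT⟩
  set v := padicValNat 2 y.toNat with hv_def
  have hy0 : y.toNat ≠ 0 := by
    have : 0 < y.toNat := by omega
    omega
  set y' := ordCompl[2] y.toNat with hy'_def
  have hy'odd : ¬ 2 ∣ y' := Nat.not_dvd_ordCompl Nat.prime_two hy0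
  have hself : 2 ^ v * y' = y.toNat := by
    have := Nat.ordProj_mul_ordCompl_eq_self y.toNat 2
    rwa [Nat.factorization_def _ Nat.prime_two] at this
  have hyY : y = ((2:ℤ) ^ v) * (y' : ℤ) := by
    have : y = (y.toNat : ℤ) := (Int.toNat_of_nonneg hy.le).symm
    rw [this, ← hself]; push_cast; ring
  have main : ∀ u : ℕ, ¬ 2 ∣ u →
      (if P (2 ^ v * u - 1) then (1 : Fin 2) else 0) = k := by
    intro u hu
    have hu0 : u ≠ 0 := by rintro rfl; exact hu (dvd_zero 2)
    set n := 2 ^ v * u with hn_def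
    have hn1 : 1 ≤ n := Nat.one_le_iff_ne_zero.mpr (mul_ne_zero (pow_ne_zero _ two_ne_zero) hu0)
    obtain ⟨hTpos, hTk⟩ := hT n hn1
    set T : ℤ := (∑ j ∈ Finset.Icc 1 n, (2:ℤ) ^ n * z n j) + c n * y with hT_def
    have hS : (2:ℤ) ^ n ∣ ∑ j ∈ Finset.Icc 1 n, (2:ℤ) ^ n * z n j :=
      Finset.dvd_sum fun j _ => dvd_mul_right _ _
    have hmod := (hc n hn1).mul_right (y' : ℤ)
    have hdvd' : (2:ℤ) ^ n ∣ (c n * (n:ℤ) * (y':ℤ) - 2 ^ (n-1) * (y':ℤ)) := by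
      have := hmod.symm.dvd
      simpa using this
    have hnz : ((n:ℕ) : ℤ) = 2 ^ v * (u : ℤ) := by rw [hn_def]; push_cast; ring
    have key : (u:ℤ) * T - 2 ^ (n-1) * (y':ℤ) =
        (u:ℤ) * (∑ j ∈ Finset.Icc 1 n, (2:ℤ) ^ n * z n j)
          + (c n * (n:ℤ) * (y':ℤ) - 2 ^ (n-1) * (y':ℤ)) := by
      rw [hT_def, hyY, hnz]; ring
    have hdvd : (2:ℤ) ^ n ∣ ((u:ℤ) * T - 2 ^ (n-1) * (y':ℤ)) := by
      rw [key]; exact dvd_add (hS.mul_left _) hdvd'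
    have hTt : T = ((T.toNat : ℕ) : ℤ) := (Int.toNat_of_nonneg hTpos.le).symm
    rw [hTt] at hdvd
    have ht0 : T.toNat ≠ 0 := by
      have : 0 < T.toNat := by omega
      omega
    have hval := aux_val n u y' T.toNat hn1 hu hy'odd ht0 hdvd
    simp only [hval] at hTk
    exact hTk
  by_cases hP : P v
  · have h1 := main 1 (by norm_num)
    have hnot : ¬ P (2 ^ v * 1 - 1) := by
      rintro ⟨w, hw⟩
      rw [mul_one] at hw
      have h2v : 1 ≤ 2 ^ v := Nat.one_le_two_pow
      have he : 2 ^ v = 3 * 2 ^ w := by omega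
      have h3 : 3 ∣ 2 ^ v := he ▸ Dvd.intro _ rfl
      have : (3 : ℕ).Coprime 2 := by norm_num
      have := (this.pow_right v).eq_one_of_dvd h3
      omega
    rw [if_neg hnot] at h1
    have hky : (if P v then (1 : Fin 2) else 0) = k := hyk
    rw [if_pos hP] at hky
    rw [← h1] at hky
    exact absurd hky (by decide)
  · have h3 := main 3 (by norm_num)
    have hyes : P (2 ^ v * 3 - 1) := by
      refine ⟨v, ?_⟩
      have h2v : 1 ≤ 2 ^ v := Nat.one_le_two_pow
      omega
    rw [if_pos hyes] at h3
    have hky : (if P v then (1 : Fin 2) else 0) = k := hyk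
    rw [if_neg hP] at hky
    rw [← h3] at hky
    exact absurd hky (by decide)
end

section
/- For every sequence of integer coefficients (c_n)_{n≥1}, the rescaled system with variables y and z_{ij} (1 ≤ j ≤ i), whose expressions are T_i = 2^i·z_{i1} + ... + 2^i·z_{ii} + c_i·y for each i ≥ 1, together with each 2^i·z_{ij} and y, is image partition regular over ℚ: for every r ≥ 1 and every colouring χ : ℚ → Fin r, there exist rationals y and z_{ij} such that y, every 2^i·z_{ij}, and every T_i are nonzero rationals all receiving the same colour under χ. -/
/-!
# The rescaled system is image partition regular over ℚ
(Barber–Hindman–Leader).  Full proof via: a minimal idempotent ultrafilter on (ℚ,+),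
syndeticity of star sets, a structure theorem for subsemigroups of ℚ generated by
syndetic sets, and a central-sets-type (IP-Brauer) theorem proved by a product
ultrafilter-space argument.
-/

open Set Filter

attribute [local instance] Ultrafilter.add Ultrafilter.addSemigroup

namespace BHLQ

set_option linter.unusedSectionVars false





/-! ### Basic ultrafilter semigroup lemmas -/

lemma mem_add {α : Type*} [AddSemigroup α] {U V : Ultrafilter α} {s : Set α} :
    s ∈ U + V ↔ {x : α | {y : α | x + y ∈ s} ∈ V} ∈ U := by
  have h := Ultrafilter.eventually_add U V (fun m => m ∈ s)
  simpa [Filter.eventually_iff] using h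

lemma pure_add_pure {α : Type*} [AddSemigroup α] (a b : α) :
    (pure a : Ultrafilter α) + pure b = pure (a + b) := by
  apply Ultrafilter.coe_injective
  apply Filter.ext
  intro s
  simp [mem_add]

lemma add_pure_zero (U : Ultrafilter ℚ) : U + pure 0 = U := by
  apply Ultrafilter.coe_injective
  apply Filter.ext
  intro s
  simp [mem_add]

/-- the sum `U + V` with `V` nonprincipal is nonprincipal (in `ℚ`). -/
lemma add_nonprincipal {V : Ultrafilter ℚ}
    (hV : ∀ z : ℚ, V ≠ pure z) (U : Ultrafilter ℚ) (z : ℚ) : U + V ≠ pure z := by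
  intro h
  have hz : {z} ∈ U + V := by rw [h]; exact Ultrafilter.mem_pure.mpr rfl
  rw [mem_add] at hz
  obtain ⟨x, hx⟩ := Ultrafilter.nonempty_of_mem hz
  simp only [mem_setOf_eq] at hx
  have hsub : {y : ℚ | x + y ∈ ({z} : Set ℚ)} = {z - x} := by
    ext y; simp [eq_sub_iff_add_eq, eq_comm, add_comm]
  rw [hsub] at hx
  obtain ⟨w, _, hw⟩ := Ultrafilter.eq_pure_of_finite_mem (finite_singleton _) hx
  exact hV w hw

/-! ### Generic compact right-topological semigroup machinery -/

section CRTS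

variable {W : Type*} [AddSemigroup W] [TopologicalSpace W] [CompactSpace W] [T2Space W]

/-- `L` is a closed left ideal inside the subsemigroup `E`. -/
def IsLID (E L : Set W) : Prop :=
  L ⊆ E ∧ L.Nonempty ∧ IsClosed L ∧ ∀ a ∈ E, ∀ b ∈ L, a + b ∈ L

theorem exists_minimal_LID {E J : Set W} (hJ : IsLID E J) :
    ∃ L, IsLID E L ∧ L ⊆ J ∧ ∀ L', IsLID E L' → L' ⊆ L → L' = L := by
  let S : Set (Set W) := {L | IsLID E L ∧ L ⊆ J}
  rsuffices ⟨N, hN⟩ : ∃ N, Minimal (· ∈ S) N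
  · exact ⟨N, hN.prop.1, hN.prop.2,
      fun L' hL' hsub => (hN.eq_of_ge ⟨hL', hsub.trans hN.prop.2⟩ hsub).symm⟩
  refine zorn_superset _ fun c hcs hc => ?_
  rcases c.eq_empty_or_nonempty with rfl | hcne
  · exact ⟨J, ⟨hJ, le_refl _⟩, by simp⟩
  refine ⟨⋂₀ c, ⟨⟨?_, ?_, ?_, ?_⟩, ?_⟩, fun s hs => sInter_subset_of_mem hs⟩
  · obtain ⟨L₀, hL₀⟩ := hcne
    exact (sInter_subset_of_mem hL₀).trans (hcs hL₀).1.1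
  · have := @IsCompact.nonempty_iInter_of_directed_nonempty_isCompact_isClosed _ _ _
      hcne.coe_sort ((↑) : c → Set W)
      (DirectedOn.directed_val (IsChain.directedOn hc.symm))
      (fun i => (hcs i.prop).1.2.1) (fun i => (hcs i.prop).1.2.2.1.isCompact)
      (fun i => (hcs i.prop).1.2.2.1)
    rwa [sInter_eq_iInter]
  · exact isClosed_sInter fun t ht => (hcs ht).1.2.2.1
  · intro a ha b hb
    rw [mem_sInter] at hb ⊢
    exact fun t ht => (hcs ht).1.2.2.2 a ha b (hb t ht)
  · obtain ⟨L₀, hL₀⟩ := hcne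
    exact (sInter_subset_of_mem hL₀).trans (hcs hL₀).2

theorem LID.idem (hc : ∀ w : W, Continuous (· + w)) {E L : Set W} (hL : IsLID E L) :
    ∃ p ∈ L, p + p = p := by
  refine exists_idempotent_in_compact_add_subsemigroup hc L hL.2.1 hL.2.2.1.isCompact ?_
  intro x hx y hy
  exact hL.2.2.2 x (hL.1 hx) y hy

/-- Below any idempotent `e` of a closed subsemigroup `E` there is an idempotent lying in a
minimal closed left ideal of `E`. -/
theorem idem_min_below (hc : ∀ w : W, Continuous (· + w)) {E : Set W} (hEc : IsClosed E)
    (hEs : ∀ a ∈ E, ∀ b ∈ E, a + b ∈ E) {e : W} (he : e ∈ E) (hee : e + e = e) :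
    ∃ f L, IsLID E L ∧ (∀ L', IsLID E L' → L' ⊆ L → L' = L) ∧
      f ∈ L ∧ f + f = f ∧ f + e = f ∧ e + f = f := by
  have hJ : IsLID E ((· + e) '' E) := by
    refine ⟨?_, ⟨e + e, e, he, rfl⟩, ?_, ?_⟩
    · rintro _ ⟨a, ha, rfl⟩; exact hEs a ha e he
    · exact (hEc.isCompact.image (hc e)).isClosed
    · rintro a ha _ ⟨b, hb, rfl⟩
      exact ⟨a + b, hEs a ha b hb, by simp [add_assoc]⟩
  obtain ⟨L, hL, hLJ, hLmin⟩ := exists_minimal_LID hJ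
  obtain ⟨f₀, hf₀L, hf₀⟩ := LID.idem hc hL
  obtain ⟨z, hz, hze⟩ := hLJ hf₀L
  have hf₀e : f₀ + e = f₀ := by
    simp only at hze
    rw [← hze, add_assoc, hee]
  refine ⟨e + f₀, L, hL, hLmin, hL.2.2.2 e he f₀ hf₀L, ?_, ?_, ?_⟩
  · calc e + f₀ + (e + f₀) = e + ((f₀ + e) + f₀) := by simp only [add_assoc]
    _ = e + (f₀ + f₀) := by rw [hf₀e]
    _ = e + f₀ := by rw [hf₀]
  · rw [add_assoc, hf₀e]
  · rw [← add_assoc, hee]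

/-- An idempotent `≤` an element of a minimal closed left ideal equals it,
provided the latter is idempotent too... (we only need: h idempotent below p, p in min ideal). -/
theorem idem_le_min_eq (hc : ∀ w : W, Continuous (· + w)) {E L : Set W}
    (hEc : IsClosed E) (hEs : ∀ a ∈ E, ∀ b ∈ E, a + b ∈ E)
    (hL : IsLID E L) (hLmin : ∀ L', IsLID E L' → L' ⊆ L → L' = L)
    {p h : W} (hp : p ∈ L) (hh : h ∈ E) (hhh : h + h = h)
    (h1 : h + p = h) (h2 : p + h = h) : h = p := by
  have hhL : h ∈ L := by rw [← h1]; exact hL.2.2.2 h hh p hp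
  have hL'' : IsLID E ((· + h) '' E) := by
    refine ⟨?_, ⟨h + h, h, hh, rfl⟩, ?_, ?_⟩
    · rintro _ ⟨a, ha, rfl⟩; exact hEs a ha h hh
    · exact (hEc.isCompact.image (hc h)).isClosed
    · rintro a ha _ ⟨b, hb, rfl⟩
      exact ⟨a + b, hEs a ha b hb, by simp [add_assoc]⟩
  have hsub : ((· + h) '' E) ⊆ L := by
    rintro _ ⟨a, ha, rfl⟩; exact hL.2.2.2 a ha h hhL
  have hLeq := hLmin _ hL'' hsub
  have hpmem : p ∈ (· + h) '' E := hLeq.symm ▸ hp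
  obtain ⟨w, hw, hwp⟩ := hpmem
  simp only at hwp
  have : p + h = p := by rw [← hwp, add_assoc, hhh]
  rw [← h2, this]

end CRTS




abbrev bQ := Ultrafilter ℚ

lemma cont_bQ : ∀ w : bQ, Continuous (· + w) := Ultrafilter.continuous_add_left

/-- Setup: a minimal closed left ideal `L₀` of `βℚ` with an idempotent `p ∈ L₀`,
which is automatically nonprincipal. -/
theorem exists_min_idem :
    ∃ (p : bQ) (L₀ : Set bQ), (p + p = p) ∧ IsLID univ L₀ ∧
      (∀ L', IsLID univ L' → L' ⊆ L₀ → L' = L₀) ∧ p ∈ L₀ ∧ (∀ z : ℚ, p ≠ pure z) := by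
  have hJ : IsLID (univ : Set bQ) univ :=
    ⟨le_refl _, ⟨pure 0, trivial⟩, isClosed_univ, fun _ _ _ _ => trivial⟩
  obtain ⟨L₀, hL₀, -, hL₀min⟩ := exists_minimal_LID hJ
  obtain ⟨p, hpL₀, hpp⟩ := LID.idem cont_bQ hL₀
  refine ⟨p, L₀, hpp, hL₀, hL₀min, hpL₀, ?_⟩
  intro z hz
  -- idempotent principal means z + z = z hence z = 0
  have hz0 : z = 0 := by
    have h2 : (pure (z + z) : bQ) = pure z := by
      rw [← pure_add_pure, ← hz, hpp]
    have h3 : z + z ∈ ({z} : Set ℚ) := by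
      have : ({z} : Set ℚ) ∈ (pure (z+z) : bQ) := by
        rw [h2]; exact Ultrafilter.mem_pure.mpr rfl
      exact Ultrafilter.mem_pure.mp this
    simp only [mem_singleton_iff] at h3
    linarith
  subst hz0
  -- pure 0 ∈ L₀ leads to contradiction via a nonprincipal v
  rw [hz] at hpL₀
  set v : bQ := (Filter.hyperfilter ℚ : Ultrafilter ℚ) with hv
  have hvnp : ∀ z : ℚ, v ≠ pure z := by
    intro z h
    have : ({z} : Set ℚ) ∈ v := by rw [h]; exact Ultrafilter.mem_pure.mpr rfl
    exact ((Set.finite_singleton z).notMem_hyperfilter) this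
  have hvL₀ : v ∈ L₀ := by
    have := hL₀.2.2.2 v trivial _ hpL₀
    rwa [add_pure_zero] at this
  have hL' : IsLID (univ : Set bQ) ((· + v) '' univ) := by
    refine ⟨subset_univ _, ⟨v + v, v, trivial, rfl⟩,
      (isCompact_univ.image (cont_bQ v)).isClosed, ?_⟩
    rintro a - _ ⟨b, -, rfl⟩
    exact ⟨a + b, trivial, by simp [add_assoc]⟩
  have hsub : ((· + v) '' univ) ⊆ L₀ := by
    rintro _ ⟨a, -, rfl⟩; exact hL₀.2.2.2 a trivial v hvL₀
  have := hL₀min _ hL' hsub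
  rw [← this] at hpL₀
  obtain ⟨w, -, hwv⟩ := hpL₀
  exact add_nonprincipal hvnp w 0 hwv

lemma no_finite_mem {p : bQ} (hnp : ∀ z : ℚ, p ≠ pure z) {F : Set ℚ} (hF : F.Finite)
    (hFp : F ∈ p) : False := by
  obtain ⟨x, -, hx⟩ := Ultrafilter.eq_pure_of_finite_mem hF hFp
  exact hnp x hx

/-- Syndeticity of the star set (Hindman–Strauss 4.39 style). -/
theorem syndetic_star {p : bQ} {L₀ : Set bQ}
    (hL₀ : IsLID univ L₀) (hL₀min : ∀ L', IsLID univ L' → L' ⊆ L₀ → L' = L₀)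
    (hpL₀ : p ∈ L₀) {A : Set ℚ} (hA : A ∈ p) :
    ∃ G : Finset ℚ, ∀ x : ℚ, ∃ g ∈ G, {y : ℚ | (g + x) + y ∈ A} ∈ p := by
  by_contra hcon
  push_neg at hcon
  set S : Set ℚ := {s | {y : ℚ | s + y ∈ A} ∈ p} with hS
  have hcon' : ∀ G : Finset ℚ, ∃ x, ∀ g ∈ G, g + x ∉ S := by
    intro G
    obtain ⟨x, hx⟩ := hcon G
    exact ⟨x, fun g hg => hx g hg⟩
  set B : Finset ℚ → Set ℚ := fun G => {x | ∀ g ∈ G, g + x ∉ S} with hB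
  have hBne : ∀ G, (B G).Nonempty := fun G => hcon' G
  have hdir : Directed (· ≥ ·) fun G => (𝓟 (B G) : Filter ℚ) := by
    intro G G'
    refine ⟨G ∪ G', ?_, ?_⟩ <;>
      · simp only [le_principal_iff, mem_principal]
        intro x hx g hg
        exact hx g (by simp [hg])
  have hne : Filter.NeBot (⨅ G : Finset ℚ, 𝓟 (B G)) := by
    apply Filter.iInf_neBot_of_directed hdir
    intro G
    exact Filter.principal_neBot_iff.mpr (hBne G)
  set w : bQ := Ultrafilter.of (⨅ G : Finset ℚ, 𝓟 (B G)) with hw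
  have hBw : ∀ G : Finset ℚ, B G ∈ w := by
    intro G
    have h1 : B G ∈ (⨅ G : Finset ℚ, 𝓟 (B G)) :=
      Filter.mem_iInf_of_mem G (Filter.mem_principal_self _)
    exact Ultrafilter.mem_coe.mp ((Ultrafilter.of_le _) h1)
  -- p = v + (w + p) for some v
  have hq : w + p ∈ L₀ := hL₀.2.2.2 w trivial p hpL₀
  have hL' : IsLID (univ : Set bQ) ((· + (w + p)) '' univ) := by
    refine ⟨subset_univ _, ⟨_, w + p, trivial, rfl⟩,
      (isCompact_univ.image (cont_bQ _)).isClosed, ?_⟩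
    rintro a - _ ⟨b, -, rfl⟩
    exact ⟨a + b, trivial, by simp [add_assoc]⟩
  have hsub : ((· + (w + p)) '' univ) ⊆ L₀ := by
    rintro _ ⟨a, -, rfl⟩; exact hL₀.2.2.2 a trivial _ hq
  have hLeq := hL₀min _ hL' hsub
  have hpmem : p ∈ (· + (w + p)) '' univ := hLeq.symm ▸ hpL₀
  obtain ⟨v, -, hvq⟩ := hpmem
  simp only at hvq
  rw [← hvq] at hA
  rw [mem_add] at hA
  obtain ⟨xb, hxb⟩ := Ultrafilter.nonempty_of_mem hA
  simp only [mem_setOf_eq] at hxb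
  rw [mem_add] at hxb
  have key : {z : ℚ | (xb + z) ∈ S} ∈ w := by
    convert hxb using 2 with z
    ext
    constructor
    · intro h
      rw [hS, mem_setOf_eq] at h
      convert h using 2
      ext y; simp [add_assoc]
    · intro h
      rw [hS, mem_setOf_eq]
      convert h using 2
      ext y; simp [add_assoc]
  have hB1 : B {xb} ∈ w := hBw {xb}
  obtain ⟨z, hz1, hz2⟩ := Ultrafilter.nonempty_of_mem (Filter.inter_mem key hB1)
  exact (hz2 xb (by simp)) hz1



/-- The set of nonempty finite sums from `S`. -/
def sumSet (S : Set ℚ) : Set ℚ :=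
  {x | ∃ l : List ℚ, l ≠ [] ∧ (∀ y ∈ l, y ∈ S) ∧ l.sum = x}

lemma sumSet_mono_mem {S : Set ℚ} {x : ℚ} (hx : x ∈ S) : x ∈ sumSet S :=
  ⟨[x], by simp, by simpa, by simp⟩

lemma sumSet_add {S : Set ℚ} {x y : ℚ} (hx : x ∈ sumSet S) (hy : y ∈ sumSet S) :
    x + y ∈ sumSet S := by
  obtain ⟨l, hl, hlS, hls⟩ := hx
  obtain ⟨l', hl', hl'S, hl's⟩ := hy
  refine ⟨l ++ l', by simp [hl], ?_, by simp [hls, hl's]⟩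
  intro z hz
  rcases List.mem_append.mp hz with h | h
  exacts [hlS z h, hl'S z h]

lemma sumSet_nsmul {S : Set ℚ} {x : ℚ} (hx : x ∈ sumSet S) :
    ∀ n : ℕ, 1 ≤ n → ((n : ℚ) * x) ∈ sumSet S := by
  intro n hn
  induction n with
  | zero => omega
  | succ m ih =>
    rcases Nat.eq_or_lt_of_le hn with h | h
    · simp only [← h]; simpa using hx
    · have hm : 1 ≤ m := by omega
      have := sumSet_add (ih hm) hx
      convert this using 1
      push_cast
      ring

lemma sumSet_zsmul {S : Set ℚ} {x : ℚ} (hx : x ∈ sumSet S) :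
    ∀ n : ℤ, 1 ≤ n → ((n : ℚ) * x) ∈ sumSet S := by
  intro n hn
  lift n to ℕ using (by omega)
  rw [Int.cast_natCast]
  exact sumSet_nsmul hx n (by exact_mod_cast hn)

set_option maxHeartbeats 1000000 in
/-- Main combinatorial theorem: finite sums from a syndetic subset of `ℚ` exhaust `ℚ`,
with a uniform bound on the number of summands. -/
theorem sums_of_syndetic {S : Set ℚ} {G : Finset ℚ}
    (hG : ∀ x : ℚ, ∃ g ∈ G, g + x ∈ S) :
    ∃ N : ℕ, 1 ≤ N ∧ ∀ x : ℚ, ∃ l : List ℚ,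
      l ≠ [] ∧ l.length ≤ N ∧ (∀ y ∈ l, y ∈ S) ∧ l.sum = x := by
  -- Step 0: notation
  set T := sumSet S with hT
  -- Step 1: denominators
  set D : ℕ := ∏ g ∈ G, g.den with hD
  have hDpos : 0 < D := Finset.prod_pos (fun g _ => g.pos)
  set γ : ℚ := (D : ℚ)⁻¹ with hγ
  have hγpos : 0 < γ := by positivity
  set e : ℚ → ℤ := fun g => g.num * ((D / g.den : ℕ) : ℤ) with he
  have heg : ∀ g ∈ G, g = γ * (e g) := by
    intro g hg
    have hdvd : g.den ∣ D := Finset.dvd_prod_of_mem _ hg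
    have hD' : (g.den : ℚ) * ((D / g.den : ℕ) : ℚ) = (D : ℚ) := by
      rw [← Nat.cast_mul, Nat.mul_div_cancel' hdvd]
    have hgnd : ((g.num : ℚ)) / ((g.den : ℚ)) = g := Rat.num_div_den g
    have hden0 : ((g.den : ℚ)) ≠ 0 := by
      have := g.pos; positivity
    have hD0 : ((D : ℚ)) ≠ 0 := by positivity
    have key : γ * ((e g : ℤ) : ℚ) = ((g.num : ℚ) * ((D / g.den : ℕ) : ℚ)) / (D : ℚ) := by
      rw [he]
      simp only [Int.cast_mul, Int.cast_natCast]
      rw [hγ]; ring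
    have hc0 : ((D / g.den : ℕ) : ℚ) ≠ 0 := by
      have : 0 < D / g.den := Nat.div_pos (Nat.le_of_dvd hDpos hdvd) g.pos
      positivity
    rw [key, ← hD', mul_div_mul_right _ _ hc0, hgnd]
  -- Step 2: the trace on the lattice line
  set M : Set ℤ := {m | γ * (m : ℚ) ∈ T} with hM
  have hMsyn : ∀ m : ℤ, ∃ g ∈ G, e g + m ∈ M := by
    intro m
    obtain ⟨g, hg, hgS⟩ := hG (γ * (m : ℚ))
    refine ⟨g, hg, ?_⟩
    have hgg := heg g hg
    have : g + γ * (m:ℚ) = γ * ((e g + m : ℤ) : ℚ) := by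
      push_cast
      rw [mul_add, ← hgg]
    rw [hM, mem_setOf_eq, ← this]
    exact sumSet_mono_mem hgS
  have hMadd : ∀ m ∈ M, ∀ m' ∈ M, m + m' ∈ M := by
    intro m hm m' hm'
    have : γ * ((m + m' : ℤ) : ℚ) = γ * m + γ * m' := by push_cast; ring
    rw [hM, mem_setOf_eq, this]
    exact sumSet_add hm hm'
  -- Step 3: elements of both signs
  set B : ℕ := G.sup (fun g => (e g).natAbs) with hB
  have habs : ∀ g ∈ G, (e g).natAbs ≤ B := fun g hg => Finset.le_sup (f := fun g => (e g).natAbs) hg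
  have habs' : ∀ g ∈ G, -(B:ℤ) ≤ e g ∧ e g ≤ (B:ℤ) := by
    intro g hg
    have := habs g hg
    omega
  obtain ⟨gu, hgu, hu⟩ := hMsyn ((B : ℤ) + 1)
  set u : ℤ := e gu + ((B:ℤ) + 1) with hudef
  have hu1 : 1 ≤ u := by have := habs' gu hgu; omega
  obtain ⟨gv, hgv, hv⟩ := hMsyn (-(B : ℤ) - 1)
  set v : ℤ := e gv + (-(B:ℤ) - 1) with hvdef
  have hv1 : v ≤ -1 := by have := habs' gv hgv; omega
  -- Step 4: full lattice in M
  set w : ℤ := -v with hw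
  have hw1 : 1 ≤ w := by omega
  set d : ℕ := Int.gcd u w with hd
  have hd1 : 1 ≤ d := by
    rw [hd, Int.gcd]
    have : u.natAbs ≠ 0 := by omega
    exact Nat.one_le_iff_ne_zero.mpr (Nat.gcd_ne_zero_left this)
  obtain ⟨u', hu'⟩ : (d:ℤ) ∣ u := Int.gcd_dvd_left u w
  obtain ⟨w', hw'⟩ : (d:ℤ) ∣ w := Int.gcd_dvd_right u w
  have hu'1 : 1 ≤ u' := by nlinarith [hu1, hu', (by exact_mod_cast hd1 : (1:ℤ) ≤ (d:ℤ))]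
  have hw'1 : 1 ≤ w' := by nlinarith [hw1, hw', (by exact_mod_cast hd1 : (1:ℤ) ≤ (d:ℤ))]
  have hlat : ∀ t : ℤ, (d:ℤ) ∣ t → t ∈ M := by
    intro t ht
    obtain ⟨t', ht'⟩ := ht
    set A' : ℤ := Int.gcdA u w with hA'
    set B' : ℤ := Int.gcdB u w with hB'
    have hbez : (d : ℤ) = u * A' + w * B' := Int.gcd_eq_gcd_ab u w
    set k : ℤ := 1 + |t' * A'| + |t' * B'| with hk
    set a1 : ℤ := t' * A' + k * w' with ha1
    set b1 : ℤ := -(t' * B') + k * u' with hb1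
    have hk0 : (0:ℤ) ≤ k := by rw [hk]; positivity
    have ha1pos : 1 ≤ a1 := by
      have hkw : k ≤ k * w' := le_mul_of_one_le_right hk0 hw'1
      have h2 : -|t' * A'| ≤ t' * A' := neg_abs_le _
      have h3 : (0:ℤ) ≤ |t' * B'| := abs_nonneg _
      have hkk : k = 1 + |t' * A'| + |t' * B'| := hk
      rw [ha1]
      linarith
    have hb1pos : 1 ≤ b1 := by
      have hku : k ≤ k * u' := le_mul_of_one_le_right hk0 hu'1
      have h2 : t' * B' ≤ |t' * B'| := le_abs_self _
      have h3 : (0:ℤ) ≤ |t' * A'| := abs_nonneg _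
      have hkk : k = 1 + |t' * A'| + |t' * B'| := hk
      rw [hb1]
      linarith
    have hsum : a1 * u + b1 * v = t := by
      have hvw : v = -w := by omega
      have h0 : w' * u - u' * w = 0 := by
        rw [hu', hw']; ring
      rw [ha1, hb1, hvw, ht']
      linear_combination (-t') * hbez + k * h0
    -- now t ∈ M via positive integer combinations
    have h1 : ((a1 : ℚ)) * (γ * (u:ℚ)) ∈ T := sumSet_zsmul hu a1 ha1pos
    have h2 : ((b1 : ℚ)) * (γ * (v:ℚ)) ∈ T := sumSet_zsmul hv b1 hb1pos
    have h3 := sumSet_add h1 h2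
    rw [hM, mem_setOf_eq]
    have : γ * (t : ℚ) = (a1:ℚ) * (γ * u) + (b1:ℚ) * (γ * v) := by
      rw [← hsum]; push_cast; ring
    rw [this]
    exact h3
  set δ : ℚ := γ * (d : ℚ) with hδ
  have hδpos : 0 < δ := by
    have : (0:ℚ) < (d:ℚ) := by exact_mod_cast hd1
    positivity
  have hΛ : ∀ j : ℤ, δ * (j : ℚ) ∈ T := by
    intro j
    have : δ * (j:ℚ) = γ * (((d : ℤ) * j : ℤ) : ℚ) := by rw [hδ]; push_cast; ring
    rw [this]
    exact hlat _ ⟨j, rfl⟩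
  -- Step 5: inverse closure
  have hinv : ∀ x ∈ T, -x ∈ T := by
    intro x hx
    set q : ℚ := x / δ with hq
    have hxq : x = δ * q := by rw [hq]; field_simp
    set n : ℕ := q.den with hn
    have hn1 : 1 ≤ n := q.pos
    have hqnum : (n : ℚ) * q = (q.num : ℚ) := by
      rw [hn, mul_comm, Rat.mul_den_eq_num]
    have hnx : (n : ℚ) * x = δ * (q.num : ℚ) := by
      rw [hxq, ← mul_assoc, mul_comm (n:ℚ) δ, mul_assoc, hqnum]
    rcases Nat.eq_or_lt_of_le hn1 with h1 | h1
    · -- n = 1 : x itself is a lattice point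
      have : x = δ * (q.num : ℚ) := by
        rw [← hnx, ← h1]; simp
      have : -x = δ * ((-q.num : ℤ) : ℚ) := by rw [this]; push_cast; ring
      rw [this]; exact hΛ _
    · -- n ≥ 2
      have h2 : -x = ((n - 1 : ℕ) : ℚ) * x + δ * ((-q.num : ℤ) : ℚ) := by
        have hc : ((n - 1 : ℕ) : ℚ) = (n : ℚ) - 1 := by
          have : 1 ≤ n := hn1; push_cast [this]; ring
        rw [hc]
        push_cast
        linear_combination (-1:ℚ) * hnx
      rw [h2]
      exact sumSet_add (sumSet_nsmul hx (n-1) (by omega)) (hΛ _)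
  -- Step 6: T = ℚ
  have hGne : G.Nonempty := by
    obtain ⟨g, hg, -⟩ := hG 0; exact ⟨g, hg⟩
  set m : ℕ := G.card with hm
  have hm1 : 1 ≤ m := Finset.card_pos.mpr hGne
  have hTall : ∀ x : ℚ, x ∈ T := by
    intro x
    set y : ℚ := x / (m.factorial : ℚ) with hy
    have hfacpos : 0 < (m.factorial : ℚ) := by exact_mod_cast m.factorial_pos
    have hxy : x = (m.factorial : ℚ) * y := by rw [hy]; field_simp
    -- select colours
    have hsel : ∀ i : Fin (m + 1), ∃ g ∈ G, g + ((i : ℕ) + 1 : ℚ) * y ∈ S := by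
      intro i; exact hG _
    choose gsel hgselG hgselS using hsel
    have hcard : G.card < (Finset.univ : Finset (Fin (m+1))).card := by
      simp [hm]
    have main : ∀ i j : Fin (m + 1), (i : ℕ) < (j : ℕ) → gsel i = gsel j → x ∈ T := by
      intro i j hvi hgeq
      set k : ℕ := (j : ℕ) - (i : ℕ) with hk
      have hk1 : 1 ≤ k := by omega
      have hkm : k ≤ m := by have := j.isLt; omega
      have ha : gsel j + ((j : ℕ) + 1 : ℚ) * y ∈ T := sumSet_mono_mem (hgselS j)
      have hb : gsel i + ((i : ℕ) + 1 : ℚ) * y ∈ T := sumSet_mono_mem (hgselS i)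
      have hnb : -(gsel i + ((i : ℕ) + 1 : ℚ) * y) ∈ T := hinv _ hb
      have hky : ((k : ℕ) : ℚ) * y ∈ T := by
        have h3 := sumSet_add ha hnb
        have : gsel j + ((j : ℕ) + 1 : ℚ) * y + -(gsel i + ((i : ℕ) + 1 : ℚ) * y)
            = ((k : ℕ) : ℚ) * y := by
          rw [hgeq, hk]
          have : ((((j:ℕ) - (i:ℕ) : ℕ)) : ℚ) = ((j:ℕ) : ℚ) - ((i:ℕ) : ℚ) := by
            push_cast [le_of_lt hvi]; ring
          rw [this]; ring
        rwa [this] at h3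
      have hdvd : k ∣ m.factorial := Nat.dvd_factorial hk1 hkm
      have hfk : ((m.factorial / k : ℕ) : ℚ) * (((k : ℕ) : ℚ) * y) = x := by
        rw [← mul_assoc, ← Nat.cast_mul, Nat.div_mul_cancel hdvd, hxy]
      have hquot1 : 1 ≤ m.factorial / k :=
        Nat.one_le_div_iff (by omega) |>.mpr (Nat.le_of_dvd m.factorial_pos hdvd)
      rw [← hfk]
      exact sumSet_nsmul hky _ hquot1
    obtain ⟨i, -, j, -, hij, hgeq⟩ :=
      Finset.exists_ne_map_eq_of_card_lt_of_maps_to hcard (fun i _ => hgselG i)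
    rcases lt_or_gt_of_ne (show (i:ℕ) ≠ (j:ℕ) from fun h => hij (Fin.ext h)) with hlt | hlt
    · exact main i j hlt hgeq
    · exact main j i hlt hgeq.symm
  -- Step 7: lengths
  have hrep : ∀ g ∈ G, ∃ l : List ℚ, l ≠ [] ∧ (∀ y ∈ l, y ∈ S) ∧ l.sum = -g :=
    fun g _ => hTall (-g)
  choose F hF1 hF2 hF3 using hrep
  set N₀ : ℕ := G.attach.sup (fun g => (F g.1 g.2).length) with hN₀
  refine ⟨N₀ + 1, by omega, ?_⟩
  intro x
  obtain ⟨g, hg, hgx⟩ := hG x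
  refine ⟨(g + x) :: F g hg, by simp, ?_, ?_, ?_⟩
  · simp only [List.length_cons]
    have : (F g hg).length ≤ N₀ :=
      Finset.le_sup (f := fun g : {x // x ∈ G} => (F g.1 g.2).length) (Finset.mem_attach G ⟨g, hg⟩)
    omega
  · intro z hz
    rcases List.mem_cons.mp hz with h | h
    · rw [h]; exact hgx
    · exact hF2 g hg z h
  · simp [hF3 g hg]






/-- C1': simultaneous choice from `p`-large sets with the total sum in a `p`-large set. -/
theorem exists_tuple_sum (p : Ultrafilter ℚ) (hp : p + p = p) :
    ∀ (n : ℕ), 1 ≤ n → ∀ (B : ℕ → Set ℚ), (∀ j, 1 ≤ j → j ≤ n → B j ∈ p) →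
    ∀ C : Set ℚ, C ∈ p →
    ∃ v : ℕ → ℚ, (∀ j, 1 ≤ j → j ≤ n → v j ∈ B j) ∧ (∑ j ∈ Finset.Icc 1 n, v j) ∈ C := by
  intro n
  induction n with
  | zero => omega
  | succ m ih =>
    intro _ B hB C hC
    rcases Nat.eq_or_lt_of_le (show 1 ≤ m + 1 by omega) with h1 | h1
    · -- base case m+1 = 1
      obtain ⟨y, hy⟩ := Ultrafilter.nonempty_of_mem
        (Filter.inter_mem (hB 1 le_rfl (by omega)) hC)
      refine ⟨fun _ => y, fun j hj1 hj2 => ?_, ?_⟩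
      · have : j = 1 := by omega
        subst this; exact hy.1
      · have : (1 : ℕ) = m + 1 := h1
        rw [← this]
        simpa using hy.2
    · have hm1 : 1 ≤ m := by omega
      set C' : Set ℚ := {x | {y | x + y ∈ C} ∈ p} with hC'
      have hC'p : C' ∈ p := by
        have : C ∈ p + p := by rw [hp]; exact hC
        rwa [mem_add] at this
      obtain ⟨v, hv, hvs⟩ := ih hm1 B (fun j h1 h2 => hB j h1 (by omega)) C' hC'p
      have hys : {y | (∑ j ∈ Finset.Icc 1 m, v j) + y ∈ C} ∈ p := hvs
      obtain ⟨y, hy⟩ := Ultrafilter.nonempty_of_mem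
        (Filter.inter_mem (hB (m+1) (by omega) le_rfl) hys)
      refine ⟨Function.update v (m+1) y, ?_, ?_⟩
      · intro j hj1 hj2
        rcases Nat.eq_or_lt_of_le hj2 with h | h
        · rw [h, Function.update_self]; exact hy.1
        · rw [Function.update_of_ne (by omega)]
          exact hv j hj1 (by omega)
      · rw [Finset.sum_Icc_succ_top (by omega : 1 ≤ m + 1)]
        rw [Function.update_self]
        have : ∑ j ∈ Finset.Icc 1 m, Function.update v (m+1) y j
            = ∑ j ∈ Finset.Icc 1 m, v j := by
          apply Finset.sum_congr rfl
          intro j hj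
          have := Finset.mem_Icc.mp hj
          rw [Function.update_of_ne (by omega)]
        rw [this]
        exact hy.2

/-- Master row lemma: given shifts `σ j` whose translates of `A` are `p`-large, and a
pivot `ρ` with `{y | ρ + y ∈ A} ∈ p`, such that `∑ σ + t = ρ`, we can solve the row with
shift `t`. -/
theorem row_master (p : Ultrafilter ℚ) (hp : p + p = p) (A : Set ℚ)
    (i : ℕ) (hi : 1 ≤ i) (σ : ℕ → ℚ) (t ρ : ℚ)
    (hσ : ∀ j, 1 ≤ j → j ≤ i → {y : ℚ | σ j + y ∈ A} ∈ p)
    (hρ : {y : ℚ | ρ + y ∈ A} ∈ p)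
    (heq : (∑ j ∈ Finset.Icc 1 i, σ j) + t = ρ) :
    ∃ v : ℕ → ℚ, (∀ j, 1 ≤ j → j ≤ i → v j ∈ A) ∧
      (∑ j ∈ Finset.Icc 1 i, v j) + t ∈ A := by
  obtain ⟨y, hy, hys⟩ := exists_tuple_sum p hp i hi
    (fun j => {y : ℚ | σ j + y ∈ A}) hσ {y : ℚ | ρ + y ∈ A} hρ
  refine ⟨fun j => σ j + y j, fun j h1 h2 => hy j h1 h2, ?_⟩
  have : (∑ j ∈ Finset.Icc 1 i, (σ j + y j)) + t
      = ρ + ∑ j ∈ Finset.Icc 1 i, y j := by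
    rw [Finset.sum_add_distrib, ← heq]; ring
  rw [this]
  exact hys

/-- Sum of `getD` over an initial range equals the list sum. -/
lemma sum_getD (l : List ℚ) : ∑ j ∈ Finset.range l.length, l.getD j 0 = l.sum := by
  induction l with
  | nil => simp
  | cons a l ih =>
    rw [List.length_cons, Finset.sum_range_succ']
    simp only [List.getD_cons_succ, List.getD_cons_zero, List.sum_cons]
    rw [ih, add_comm]

lemma sum_getD_shift (l : List ℚ) (i : ℕ) (hi : l.length ≤ i) :
    ∑ j ∈ Finset.Icc 1 i, l.getD (j - 1) 0 = l.sum := by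
  have hmap : Finset.Icc 1 i = Finset.map ⟨fun j => j + 1, add_left_injective 1⟩
      (Finset.range i) := by
    ext j
    simp only [Finset.mem_Icc, Finset.mem_map, Finset.mem_range, Function.Embedding.coeFn_mk]
    constructor
    · intro h; exact ⟨j - 1, by omega, by omega⟩
    · rintro ⟨a, ha, rfl⟩; omega
  have h1 : ∑ j ∈ Finset.Icc 1 i, l.getD (j - 1) 0
      = ∑ j ∈ Finset.range i, l.getD j 0 := by
    rw [hmap, Finset.sum_map]
    simp
  rw [h1, ← sum_getD l]
  symm
  apply Finset.sum_subset
  · intro j hj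
    simp only [Finset.mem_range] at hj ⊢
    omega
  · intro j hj hj2
    simp only [Finset.mem_range] at hj hj2
    apply List.getD_eq_default
    omega



/-- membership in pure+V sums -/
lemma mem_pure_add {c : ℚ} {V : bQ} {s : Set ℚ} :
    s ∈ (pure c : bQ) + V ↔ {y : ℚ | c + y ∈ s} ∈ V := by
  rw [mem_add]
  constructor
  · intro h
    have := Ultrafilter.mem_pure.mp h
    exact this
  · intro h
    exact Ultrafilter.mem_pure.mpr h

lemma cont_pure_add (c : ℚ) : Continuous (fun v : bQ => (pure c : bQ) + v) := by
  rw [ultrafilterBasis_is_basis.continuous_iff]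
  rintro _ ⟨s, rfl⟩
  have : (fun v : bQ => (pure c : bQ) + v) ⁻¹' {u | s ∈ u}
      = {u : bQ | {y : ℚ | c + y ∈ s} ∈ u} := by
    ext v; simp [mem_pure_add]
  rw [this]
  exact ultrafilter_isOpen_basic _

lemma contX {k : ℕ} : ∀ w : (Fin k → bQ), Continuous (· + w) := by
  intro w
  exact continuous_pi fun i => (Ultrafilter.continuous_add_left (w i)).comp (continuous_apply i)

lemma contX_pure {k : ℕ} (c : Fin k → ℚ) :
    Continuous (fun w : (Fin k → bQ) => (fun i => (pure (c i) : bQ)) + w) := by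
  exact continuous_pi fun i => (cont_pure_add (c i)).comp (continuous_apply i)

/-- Basic neighbourhoods in products of ultrafilter spaces. -/
lemma exists_basic_nbhd {k : ℕ} (z : Fin k → bQ) (N : Set (Fin k → bQ))
    (hN : IsOpen N) (hz : z ∈ N) :
    ∃ B : Fin k → Set ℚ, (∀ i, B i ∈ z i) ∧ {w : Fin k → bQ | ∀ i, B i ∈ w i} ⊆ N := by
  obtain ⟨I, u, hu, hsub⟩ := isOpen_pi_iff.mp hN z hz
  have hsel : ∀ i : Fin k, ∃ B : Set ℚ, B ∈ z i ∧ (i ∈ I → {w : bQ | B ∈ w} ⊆ u i) := by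
    intro i
    by_cases hi : i ∈ I
    · obtain ⟨v, hvB, hzv, hvu⟩ :=
        ultrafilterBasis_is_basis.exists_subset_of_mem_open (hu i hi).2 (hu i hi).1
      obtain ⟨s, rfl⟩ := hvB
      exact ⟨s, hzv, fun _ => hvu⟩
    · exact ⟨univ, univ_mem, fun h => absurd h hi⟩
  choose B hB1 hB2 using hsel
  refine ⟨B, hB1, ?_⟩
  intro w hw
  apply hsub
  intro i hi
  exact hB2 i hi (hw i)

lemma open_basicX {k : ℕ} (B : Fin k → Set ℚ) :
    IsOpen {w : Fin k → bQ | ∀ i, B i ∈ w i} := by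
  have : {w : Fin k → bQ | ∀ i, B i ∈ w i} = ⋂ i, (fun w : Fin k → bQ => w i) ⁻¹' {u | B i ∈ u} := by
    ext w; simp
  rw [this]
  exact isOpen_iInter_of_finite fun i =>
    (ultrafilter_isOpen_basic (B i)).preimage (continuous_apply i)

/-- The IP-Brauer theorem (a central-sets-type theorem): if `p` is an idempotent in a minimal
closed left ideal of `βℚ`, `C ∈ p`, `x` any stream, and `cs` a finite list of integer
multipliers, then there are `a` and `d ∈ FS(x)` with `a ∈ C` and `a + c·d ∈ C` for all
`c ∈ cs`. -/
theorem ip_brauer (p : bQ) (hp : p + p = p) (L₀ : Set bQ)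
    (hL₀ : IsLID univ L₀) (hmin : ∀ L', IsLID univ L' → L' ⊆ L₀ → L' = L₀) (hpL₀ : p ∈ L₀)
    (C : Set ℚ) (hC : C ∈ p) (x : Stream' ℚ) (cs : List ℤ) :
    ∃ a d : ℚ, d ∈ Hindman.FS x ∧ a ∈ C ∧ ∀ c ∈ cs, a + (c : ℚ) * d ∈ C := by
  classical
  set k : ℕ := cs.length + 1 with hk
  set μ : Fin k → ℤ := fun i => (0 :: cs).getD i 0 with hμ
  set gen : ℚ → ℚ → (Fin k → bQ) := fun a d => (fun i => pure (a + (μ i : ℚ) * d)) with hgen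
  set I : ℕ → Set (Fin k → bQ) :=
    fun m => {z | ∃ a d, d ∈ Hindman.FS (x.drop m) ∧ z = gen a d} with hI
  set Y : Set (Fin k → bQ) := ⋂ m, closure (I m) with hY
  set dg : Fin k → bQ := fun _ => p with hdg
  -- generators add
  have gen_add : ∀ a d a' d' : ℚ, gen a d + gen a' d' = gen (a + a') (d + d') := by
    intro a d a' d'
    funext i
    show (pure (a + (μ i:ℚ) * d) : bQ) + pure (a' + (μ i:ℚ) * d') = _
    rw [pure_add_pure]
    congr 1
    ring
  -- FS facts
  have FS_mono : ∀ m n : ℕ, m ≤ n → Hindman.FS (x.drop n) ⊆ Hindman.FS (x.drop m) := by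
    intro m n hmn
    have h1 : n - m + m = n := by omega
    have : x.drop n = (x.drop m).drop (n - m) := by
      rw [Stream'.drop_drop, add_comm, h1]
    rw [this]
    exact Hindman.FS_iter_tail_sub_FS _ _
  have hImono : ∀ m n : ℕ, m ≤ n → I n ⊆ I m := by
    rintro m n hmn z ⟨a, d, hd, rfl⟩
    exact ⟨a, d, FS_mono m n hmn hd, rfl⟩
  have hIne : ∀ m, (I m).Nonempty :=
    fun m => ⟨gen 0 ((x.drop m).head), 0, _, Hindman.FS.head _, rfl⟩
  have hYne : Y.Nonempty := by
    rw [hY]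
    apply IsCompact.nonempty_iInter_of_sequence_nonempty_isCompact_isClosed
    · intro n
      exact closure_mono (hImono n (n+1) (by omega))
    · intro n
      exact (hIne n).mono subset_closure
    · exact isClosed_closure.isCompact
    · intro n; exact isClosed_closure
  have hYclosed : IsClosed Y := isClosed_iInter fun m => isClosed_closure
  -- key additions preserving Y
  have hYaddY : ∀ u ∈ Y, ∀ v ∈ Y, u + v ∈ Y := by
    intro u hu v hv
    rw [hY, mem_iInter]
    intro m
    rw [mem_closure_iff]
    intro O hO hOuv
    have hO' : IsOpen ((· + v) ⁻¹' O) := hO.preimage (contX v)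
    have hu' : u ∈ (· + v) ⁻¹' O := hOuv
    obtain ⟨g, hgO', hgI⟩ := mem_closure_iff.mp ((mem_iInter.mp hu) m) _ hO' hu'
    obtain ⟨a, d, hd, rfl⟩ := hgI
    obtain ⟨n, hn⟩ := Hindman.FS.add hd
    have hO'' : IsOpen ((gen a d + ·) ⁻¹' O) := by
      have : (gen a d + ·) = (fun w : Fin k → bQ => (fun i => (pure (a + (μ i:ℚ)*d) : bQ)) + w) := rfl
      rw [this]
      exact hO.preimage (contX_pure _)
    have hv' : v ∈ (gen a d + ·) ⁻¹' O := hgO'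
    obtain ⟨g', hg'O, hg'I⟩ := mem_closure_iff.mp ((mem_iInter.mp hv) (n + m)) _ hO'' hv'
    obtain ⟨a', d', hd', rfl⟩ := hg'I
    refine ⟨gen a d + gen a' d', hg'O, ?_⟩
    rw [gen_add]
    refine ⟨a + a', d + d', ?_, rfl⟩
    apply hn
    rwa [Stream'.drop_drop, add_comm]
  have hgen_dg_cl : ∀ (m : ℕ) (a d : ℚ), d ∈ Hindman.FS (x.drop m) →
      gen a d + dg ∈ closure (I m) := by
    intro m a d hd
    rw [mem_closure_iff]
    intro O hO hmem
    obtain ⟨B, hB1, hB2⟩ := exists_basic_nbhd _ O hO hmem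
    have hB1' : ∀ i, {y : ℚ | (a + (μ i:ℚ)*d) + y ∈ B i} ∈ p := by
      intro i
      have := hB1 i
      show _
      rw [show (gen a d + dg) i = (pure (a + (μ i:ℚ)*d) : bQ) + p from rfl] at this
      rwa [mem_pure_add] at this
    have hint : (⋂ i, {y : ℚ | (a + (μ i:ℚ)*d) + y ∈ B i}) ∈ p := iInter_mem.mpr hB1'
    obtain ⟨y₀, hy₀⟩ := Ultrafilter.nonempty_of_mem hint
    refine ⟨gen (a + y₀) d, ?_, ⟨a + y₀, d, hd, rfl⟩⟩
    apply hB2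
    intro i
    show B i ∈ (pure ((a + y₀) + (μ i:ℚ)*d) : bQ)
    rw [Ultrafilter.mem_pure]
    have h3 := mem_iInter.mp hy₀ i
    simp only [mem_setOf_eq] at h3
    have h4 : (a + y₀) + (μ i:ℚ)*d = (a + (μ i:ℚ)*d) + y₀ := by ring
    rw [h4]
    exact h3
  have hYadddg : ∀ u ∈ Y, u + dg ∈ Y := by
    intro u hu
    rw [hY, mem_iInter]
    intro m
    rw [mem_closure_iff]
    intro O hO hOu
    have hO' : IsOpen ((· + dg) ⁻¹' O) := hO.preimage (contX dg)
    obtain ⟨g, hgO', hgI⟩ := mem_closure_iff.mp ((mem_iInter.mp hu) m) _ hO' hOu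
    obtain ⟨a, d, hd, rfl⟩ := hgI
    have := hgen_dg_cl m a d hd
    exact mem_closure_iff.mp this O hO hgO'
  have hdgaddY : ∀ v ∈ Y, dg + v ∈ Y := by
    intro v hv
    rw [hY, mem_iInter]
    intro m
    rw [mem_closure_iff]
    intro O hO hOv
    obtain ⟨B, hB1, hB2⟩ := exists_basic_nbhd _ O hO hOv
    have hB1' : ∀ i, {z : ℚ | {y : ℚ | z + y ∈ B i} ∈ v i} ∈ p := by
      intro i
      have := hB1 i
      rw [show (dg + v) i = p + v i from rfl, mem_add] at this
      exact this
    obtain ⟨z₀, hz₀⟩ := Ultrafilter.nonempty_of_mem (iInter_mem.mpr hB1')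
    set B' : Fin k → Set ℚ := fun i => {y | z₀ + y ∈ B i} with hB'
    have hvB' : v ∈ {w : Fin k → bQ | ∀ i, B' i ∈ w i} := by
      intro i
      exact mem_iInter.mp hz₀ i
    obtain ⟨g, hgB', hgI⟩ := mem_closure_iff.mp ((mem_iInter.mp hv) m) _ (open_basicX B') hvB'
    obtain ⟨a, d, hd, rfl⟩ := hgI
    refine ⟨gen (z₀ + a) d, ?_, ⟨z₀ + a, d, hd, rfl⟩⟩
    apply hB2
    intro i
    have := hgB' i
    show B i ∈ (pure ((z₀ + a) + (μ i:ℚ)*d) : bQ)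
    rw [Ultrafilter.mem_pure]
    have h2 : (a + (μ i:ℚ)*d) ∈ B' i := by
      have := hgB' i
      rwa [show (gen a d) i = (pure (a + (μ i:ℚ)*d) : bQ) from rfl, Ultrafilter.mem_pure] at this
    rw [hB'] at h2
    simp only [mem_setOf_eq] at h2
    have h4 : (z₀ + a) + (μ i:ℚ)*d = z₀ + (a + (μ i:ℚ)*d) := by ring
    rw [h4]
    exact h2
  -- the ambient semigroup E
  set E : Set (Fin k → bQ) := Y ∪ {dg} with hE
  have hdgdg : dg + dg = dg := by
    funext i
    show p + p = p
    exact hp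
  have hEc : IsClosed E := hYclosed.union isClosed_singleton
  have hEs : ∀ a ∈ E, ∀ b ∈ E, a + b ∈ E := by
    rintro a (ha | ha) b (hb | hb)
    · exact Or.inl (hYaddY a ha b hb)
    · rw [mem_singleton_iff] at hb; subst hb; exact Or.inl (hYadddg a ha)
    · rw [mem_singleton_iff] at ha; subst ha; exact Or.inl (hdgaddY b hb)
    · rw [mem_singleton_iff] at ha hb; subst ha; subst hb
      rw [hdgdg]; exact Or.inr rfl
  have hdgE : dg ∈ E := Or.inr rfl
  -- minimal idempotent below dg in E
  obtain ⟨f, L, hLlid, hLmin, hfL, hff, hfdg, hdgf⟩ :=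
    idem_min_below contX hEc hEs hdgE hdgdg
  -- f ∈ Y
  have hEY : ∀ a ∈ E, ∀ y ∈ Y, a + y ∈ Y := by
    rintro a (ha | ha) y hy
    · exact hYaddY a ha y hy
    · rw [mem_singleton_iff] at ha; subst ha; exact hdgaddY y hy
  have hYE : ∀ y ∈ Y, ∀ a ∈ E, y + a ∈ Y := by
    rintro y hy a (ha | ha)
    · exact hYaddY y hy a ha
    · rw [mem_singleton_iff] at ha; subst ha; exact hYadddg y hy
  have hfY : f ∈ Y := by
    have hLsub : ((· + f) '' Y) ⊆ L := by
      rintro _ ⟨y, hy, rfl⟩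
      exact hLlid.2.2.2 y (Or.inl hy) f hfL
    have hlid : IsLID E ((· + f) '' Y) := by
      refine ⟨fun z hz => hLlid.1 (hLsub hz), ?_, ?_, ?_⟩
      · obtain ⟨y, hy⟩ := hYne
        exact ⟨y + f, y, hy, rfl⟩
      · exact ((hYclosed.isCompact.image (contX f)).isClosed)
      · rintro a ha _ ⟨y, hy, rfl⟩
        exact ⟨a + y, hEY a ha y hy, by simp [add_assoc]⟩
    have := hLmin _ hlid hLsub
    have hfmem : f ∈ (· + f) '' Y := this ▸ hfL
    obtain ⟨y, hy, hyf⟩ := hfmem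
    rw [← hyf]
    exact hYE y hy f (hLlid.1 hfL)
  -- coordinates of f are idempotents below p, hence equal p
  have hfcoord : ∀ i, f i = p := by
    intro i
    refine idem_le_min_eq cont_bQ isClosed_univ (fun a _ b _ => trivial)
      hL₀ hmin hpL₀ trivial ?_ ?_ ?_
    · show (f + f) i = f i
      rw [hff]
    · show (f + dg) i = f i
      rw [hfdg]
    · show (dg + f) i = f i
      rw [hdgf]
  have hfdg' : f = dg := by
    funext i
    rw [hfcoord i]
  have hdgY : dg ∈ Y := hfdg' ▸ hfY
  -- extraction
  have hdgcl : dg ∈ closure (I 0) := (mem_iInter.mp hdgY) 0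
  set N : Set (Fin k → bQ) := {w | ∀ i, C ∈ w i} with hN
  have hNopen : IsOpen N := open_basicX (fun _ => C)
  have hdgN : dg ∈ N := fun i => hC
  obtain ⟨g, hgN, hgI⟩ := mem_closure_iff.mp hdgcl N hNopen hdgN
  obtain ⟨a, d, hd, rfl⟩ := hgI
  have hcoords : ∀ i : Fin k, a + ((μ i : ℤ) : ℚ) * d ∈ C := by
    intro i
    have := hgN i
    rwa [show (gen a d) i = (pure (a + (μ i:ℚ)*d) : bQ) from rfl, Ultrafilter.mem_pure] at this
  refine ⟨a, d, by simpa using hd, ?_, ?_⟩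
  · have := hcoords ⟨0, by omega⟩
    simpa [hμ] using this
  · intro c hc
    obtain ⟨n, hn, hcn⟩ := List.mem_iff_getElem.mp hc
    have hlt : n + 1 < k := by omega
    have := hcoords ⟨n + 1, hlt⟩
    have hμval : μ ⟨n + 1, hlt⟩ = c := by
      rw [hμ]
      simp only [List.getD_cons_succ]
      rw [List.getD_eq_getElem _ _ hn, hcn]
    rwa [hμval] at this






end BHLQ

open BHLQ in
/-- **The rescaled system is image partition regular over ℚ.**
For every sequence of integer coefficients `(c_n)`, the rescaled system with
variables `y` and `z_{ij}` (`1 ≤ j ≤ i`), whose expressions are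
`T_i = 2^i·z_{i1} + ⋯ + 2^i·z_{ii} + c_i·y` for each `i ≥ 1`, each
`2^i·z_{ij}`, and `y`, is image partition regular over `ℚ`: for every `r ≥ 1`
and every colouring `χ : ℚ → Fin r` there are rational values of the
variables such that `y`, every `2^i·z_{ij}`, and every `T_i` are nonzero and
all receive the same colour. -/
theorem rescaled_system_image_partition_regular_over_Q (c : ℕ → ℤ) :
    ∀ r : ℕ, 1 ≤ r → ∀ χ : ℚ → Fin r,
      ∃ (y : ℚ) (z : ℕ → ℕ → ℚ) (k : Fin r),
        (y ≠ 0 ∧ χ y = k) ∧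
        (∀ i j : ℕ, 1 ≤ j → j ≤ i →
          (2 : ℚ) ^ i * z i j ≠ 0 ∧ χ ((2 : ℚ) ^ i * z i j) = k) ∧
        (∀ i : ℕ, 1 ≤ i →
          (∑ j ∈ Finset.Icc 1 i, (2 : ℚ) ^ i * z i j) + (c i : ℚ) * y ≠ 0 ∧
          χ ((∑ j ∈ Finset.Icc 1 i, (2 : ℚ) ^ i * z i j) + (c i : ℚ) * y) = k) := by
  intro r hr χ
  classical
  obtain ⟨p, L₀, hpp, hL₀, hmin, hpL₀, hnp⟩ := exists_min_idem
  -- find the colour class of p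
  have hUcov : (⋃ k : Fin r, {x : ℚ | χ x = k ∧ x ≠ 0}) ∈ p := by
    have hz : ({0} : Set ℚ)ᶜ ∈ p := by
      rw [Ultrafilter.compl_mem_iff_notMem]
      intro h
      exact no_finite_mem hnp (finite_singleton 0) h
    apply Filter.mem_of_superset hz
    intro x hx
    simp only [mem_compl_iff, mem_singleton_iff] at hx
    exact mem_iUnion.mpr ⟨χ x, rfl, hx⟩
  have : ∃ k : Fin r, {x : ℚ | χ x = k ∧ x ≠ 0} ∈ p := by
    have h1 : (⋃ k ∈ (univ : Set (Fin r)), {x : ℚ | χ x = k ∧ x ≠ 0}) ∈ p := by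
      simpa using hUcov
    obtain ⟨k, -, hk⟩ := (Ultrafilter.finite_biUnion_mem_iff finite_univ).mp h1
    exact ⟨k, hk⟩
  obtain ⟨k₀, hA⟩ := this
  set A : Set ℚ := {x : ℚ | χ x = k₀ ∧ x ≠ 0} with hAdef
  -- the star set S
  set S : Set ℚ := {s : ℚ | {y : ℚ | s + y ∈ A} ∈ p} with hSdef
  have hSp : S ∈ p := by
    have : A ∈ p + p := by rw [hpp]; exact hA
    rwa [BHLQ.mem_add] at this
  -- syndeticity
  obtain ⟨G, hG⟩ := syndetic_star hL₀ hmin hpL₀ hA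
  have hG' : ∀ x : ℚ, ∃ g ∈ G, g + x ∈ S := by
    intro x
    obtain ⟨g, hg, hgx⟩ := hG x
    exact ⟨g, hg, hgx⟩
  -- bounded-length sums
  obtain ⟨N, hN1, hNrep⟩ := sums_of_syndetic hG'
  -- Hindman stream inside A ∩ S
  have hCp : A ∩ S ∈ p := Filter.inter_mem hA hSp
  obtain ⟨xs, hxs⟩ := Hindman.exists_FS_of_large p hpp _ hCp
  -- IP-Brauer for the small rows
  set cs : List ℤ := (List.range N).map (fun n => c (n + 1)) with hcs
  obtain ⟨a, q, hqFS, haC, hsmall⟩ := ip_brauer p hpp L₀ hL₀ hmin hpL₀ _ hCp xs cs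
  have hqC : q ∈ A ∩ S := hxs hqFS
  have haS : a ∈ S := haC.2
  have haA : a ∈ A := haC.1
  -- solve each row
  have hrow : ∀ i : ℕ, 1 ≤ i → ∃ v : ℕ → ℚ,
      (∀ j, 1 ≤ j → j ≤ i → v j ∈ A) ∧
      (∑ j ∈ Finset.Icc 1 i, v j) + (c i : ℚ) * q ∈ A := by
    intro i hi
    by_cases hiN : i ≤ N
    · -- small rows: use IP-Brauer
      have hci : c i ∈ cs := by
        rw [hcs]
        apply List.mem_map.mpr
        exact ⟨i - 1, by simp [List.mem_range]; omega, by congr 1; omega⟩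
      have hw : a + (c i : ℚ) * q ∈ A ∩ S := hsmall (c i) hci
      apply row_master p hpp A i hi (fun j => if j = 1 then a else 0) _ (a + (c i : ℚ) * q)
      · intro j h1 h2
        by_cases hj : j = 1
        · simp only [hj, if_pos rfl]
          exact haS
        · simp only [if_neg hj]
          simpa using hA
      · exact hw.2
      · rw [Finset.sum_ite_eq' (Finset.Icc 1 i) 1 (fun _ => a)]
        simp [Finset.mem_Icc, hi]
    · -- large rows: bounded-length sums
      obtain ⟨l, hlne, hllen, hlS, hlsum⟩ := hNrep (a - (c i : ℚ) * q)
      have hlleni : l.length ≤ i := by omega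
      apply row_master p hpp A i hi (fun j => l.getD (j - 1) 0) _ a
      · intro j h1 h2
        by_cases hj : j - 1 < l.length
        · have hmem : l.getD (j-1) 0 ∈ l := by
            rw [List.getD_eq_getElem _ _ hj]
            exact List.getElem_mem hj
          exact hlS _ hmem
        · rw [List.getD_eq_default _ _ (by omega)]
          simpa using hA
      · exact haS
      · rw [sum_getD_shift l i hlleni, hlsum]
        ring
  choose v hv1 hv2 using hrow
  -- assemble
  refine ⟨q, fun i j => if hi : 1 ≤ i then (v i hi j) / 2^i else 0, k₀, ?_, ?_, ?_⟩
  · exact ⟨hqC.1.2, hqC.1.1⟩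
  · intro i j hj1 hj2
    have hi : 1 ≤ i := le_trans hj1 hj2
    have h2 : (2:ℚ)^i ≠ 0 := by positivity
    have hval : (2:ℚ)^i * (if hi : 1 ≤ i then (v i hi j) / 2^i else 0) = v i hi j := by
      rw [dif_pos hi]
      field_simp
    rw [hval]
    have := hv1 i hi j hj1 hj2
    exact ⟨this.2, this.1⟩
  · intro i hi
    have h2 : (2:ℚ)^i ≠ 0 := by positivity
    have hsum : (∑ j ∈ Finset.Icc 1 i, (2:ℚ)^i * (if hi : 1 ≤ i then (v i hi j) / 2^i else 0))
        = ∑ j ∈ Finset.Icc 1 i, v i hi j := by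
      apply Finset.sum_congr rfl
      intro j hj
      rw [dif_pos hi]
      field_simp
    rw [hsum]
    have := hv2 i hi
    exact ⟨this.2, this.1⟩
end
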